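/- arXiv:2401.03174 — 5 statements merged into one kernel-verified Lean document; each statement's English description precedes it below -/
import Mathlib

section
/- For any real numbers N ≥ H ≥ 1 and any function f : ℤ → ℂ supported on {1,...,⌊N⌋}, we have |(1/⌊N⌋) ∑_{n=1}^{⌊N⌋} f(n)|² ≤ ((N+H)/⌊N⌋) · ∑_{h∈ℤ} μ_H(h) · (1/⌊N⌋) ∑_{n=1}^{⌊N⌋} conj(f(n+h)) f(n), where μ_H(h) = #{(h₁,h₂) ∈ {1,...,⌊H⌋}² : h₁ - h₂ = h} / ⌊H⌋². -/
noncomputable section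

/-- The Fejér-type weight `μ_H(h) = #{(h₁,h₂) ∈ [H]² : h₁ - h₂ = h} / ⌊H⌋²`. -/
def fejerWeight (H : ℝ) (h : ℤ) : ℝ :=
  (((Finset.Icc (1:ℤ) ⌊H⌋ ×ˢ Finset.Icc (1:ℤ) ⌊H⌋).filter (fun p => p.1 - p.2 = h)).card : ℝ) /
    (⌊H⌋ : ℝ) ^ 2

/-- Van der Corput's inequality. -/
theorem van_der_corput (N H : ℝ) (hH : 1 ≤ H) (hHN : H ≤ N) (f : ℤ → ℂ)
    (hsupp : ∀ n : ℤ, n ∉ Finset.Icc (1:ℤ) ⌊N⌋ → f n = 0) :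
    ‖(⌊N⌋ : ℂ)⁻¹ * ∑ n ∈ Finset.Icc (1:ℤ) ⌊N⌋, f n‖ ^ 2 ≤
      (N + H) / (⌊N⌋ : ℝ) *
        (∑' h : ℤ, ((fejerWeight H h : ℂ) *
          ((⌊N⌋ : ℂ)⁻¹ * ∑ n ∈ Finset.Icc (1:ℤ) ⌊N⌋,
            (starRingEnd ℂ) (f (n + h)) * f n))).re := by
  have hHn : (1:ℤ) ≤ ⌊H⌋ := by exact_mod_cast Int.le_floor.2 (by exact_mod_cast hH)
  have hNn : (1:ℤ) ≤ ⌊N⌋ := by exact_mod_cast Int.le_floor.2 (by push_cast; linarith)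
  have hHNn : ⌊H⌋ ≤ ⌊N⌋ := Int.floor_le_floor hHN
  set Nn : ℤ := ⌊N⌋ with hNdef
  set Hn : ℤ := ⌊H⌋ with hHdef
  set A : Finset ℤ := Finset.Icc (1:ℤ) Nn with hA
  set B : Finset ℤ := Finset.Icc (1:ℤ) Hn with hB
  set J : Finset ℤ := Finset.Icc (1-Hn) Nn with hJ
  set D : Finset ℤ := Finset.Icc (1-Hn) (Hn-1) with hD
  set S : ℂ := ∑ n ∈ A, f n with hS
  set F : ℤ → ℂ := fun m => ∑ h ∈ B, f (m+h) with hF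
  -- generic extension lemma
  have ext_sum : ∀ (g : ℤ → ℂ) (s t : Finset ℤ), s ⊆ t → (∀ n ∈ t, n ∉ s → g n = 0) →
      ∑ n ∈ t, g n = ∑ n ∈ s, g n := fun g s t hst h0 => (Finset.sum_subset hst h0).symm
  -- E1
  have E1 : ∀ h ∈ B, ∑ n ∈ J, f (n+h) = S := by
    intro h hmem
    rw [hB, Finset.mem_Icc] at hmem
    have step : ∑ n ∈ J, f (n+h) = ∑ m ∈ Finset.Icc (1-Hn+h) (Nn+h), f m := by
      refine Finset.sum_nbij' (fun n => n + h) (fun m => m - h) ?_ ?_ ?_ ?_ ?_ <;>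
        simp [hJ, Finset.mem_Icc] <;> omega
    rw [step]
    refine ext_sum f A _ ?_ ?_
    · intro n hn; rw [hA, Finset.mem_Icc] at hn; rw [Finset.mem_Icc]; omega
    · intro n _ hn; exact hsupp n hn
  have E2 : ∑ m ∈ J, F m = (Hn:ℂ) * S := by
    rw [hF]
    rw [Finset.sum_comm]
    rw [Finset.sum_congr rfl E1]
    simp [hB, Finset.sum_const, Int.card_Icc]
    left
    exact_mod_cast congrArg (Int.cast : ℤ → ℂ) (Int.toNat_of_nonneg (by omega))
  have E3 : ∀ h1 ∈ B, ∀ h2 ∈ B,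
      ∑ n ∈ A, (starRingEnd ℂ) (f (n + (h1 - h2))) * f n
        = ∑ m ∈ J, (starRingEnd ℂ) (f (m + h1)) * f (m + h2) := by
    intro h1 h1m h2 h2m
    rw [hB, Finset.mem_Icc] at h1m h2m
    have stepa : ∑ n ∈ A, (starRingEnd ℂ) (f (n + (h1 - h2))) * f n
        = ∑ m ∈ Finset.Icc (1-h2) (Nn-h2), (starRingEnd ℂ) (f (m + h1)) * f (m + h2) := by
      refine Finset.sum_nbij' (fun n => n - h2) (fun m => m + h2) ?_ ?_ ?_ ?_ ?_
      · intro n hn; rw [hA, Finset.mem_Icc] at hn; rw [Finset.mem_Icc]; omega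
      · intro m hm; rw [Finset.mem_Icc] at hm; rw [hA, Finset.mem_Icc]; omega
      · intro n _; ring
      · intro m _; ring
      · intro n _
        rw [show n - h2 + h1 = n + (h1 - h2) by ring, show n - h2 + h2 = n by ring]
    have stepb : ∑ m ∈ J, (starRingEnd ℂ) (f (m + h1)) * f (m + h2)
        = ∑ m ∈ Finset.Icc (1-h2) (Nn-h2), (starRingEnd ℂ) (f (m + h1)) * f (m + h2) := by
      refine ext_sum _ _ _ ?_ ?_
      · intro n hn; rw [Finset.mem_Icc] at hn; rw [hJ, Finset.mem_Icc]; omega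
      · intro m _ hm
        have : f (m + h2) = 0 := by
          apply hsupp; rw [hA, Finset.mem_Icc]; rw [Finset.mem_Icc] at hm; omega
        rw [this, mul_zero]
    rw [stepa, stepb]
  -- μ vanishes outside D
  have hmu0 : ∀ h : ℤ, h ∉ D → fejerWeight H h = 0 := by
    intro h hh
    rw [hD, Finset.mem_Icc] at hh
    have : ((B ×ˢ B).filter (fun p => p.1 - p.2 = h)) = ∅ := by
      rw [Finset.filter_eq_empty_iff]
      rintro ⟨p1, p2⟩ hp
      rw [Finset.mem_product, hB, Finset.mem_Icc, Finset.mem_Icc] at hp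
      simp only [ne_eq]
      omega
    unfold fejerWeight
    rw [← hHdef, ← hB, this]
    simp
  -- tsum to finite sum
  have E4 : (∑' h : ℤ, ((fejerWeight H h : ℂ) *
        ((Nn : ℂ)⁻¹ * ∑ n ∈ A, (starRingEnd ℂ) (f (n + h)) * f n)))
      = ∑ h ∈ D, ((fejerWeight H h : ℂ) *
        ((Nn : ℂ)⁻¹ * ∑ n ∈ A, (starRingEnd ℂ) (f (n + h)) * f n)) := by
    refine tsum_eq_sum ?_
    intro h hh
    rw [hmu0 h hh]
    simp
  -- E5 : weighted sum equals sum of squares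
  have E5 : ∑ h ∈ D, ((((Finset.Icc (1:ℤ) Hn ×ˢ Finset.Icc (1:ℤ) Hn).filter
        (fun p => p.1 - p.2 = h)).card : ℂ))
        * (∑ n ∈ A, (starRingEnd ℂ) (f (n + h)) * f n)
      = ∑ m ∈ J, (starRingEnd ℂ) (F m) * F m := by
    have step1 : ∀ h ∈ D, ((((Finset.Icc (1:ℤ) Hn ×ˢ Finset.Icc (1:ℤ) Hn).filter
          (fun p => p.1 - p.2 = h)).card : ℂ))
          * (∑ n ∈ A, (starRingEnd ℂ) (f (n + h)) * f n)
        = ∑ p ∈ (Finset.Icc (1:ℤ) Hn ×ˢ Finset.Icc (1:ℤ) Hn).filter (fun p => p.1 - p.2 = h),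
            ∑ n ∈ A, (starRingEnd ℂ) (f (n + (p.1 - p.2))) * f n := by
      intro h _
      have hc : ∀ p ∈ (Finset.Icc (1:ℤ) Hn ×ˢ Finset.Icc (1:ℤ) Hn).filter
            (fun p => p.1 - p.2 = h),
          (∑ n ∈ A, (starRingEnd ℂ) (f (n + (p.1 - p.2))) * f n)
            = ∑ n ∈ A, (starRingEnd ℂ) (f (n + h)) * f n := by
        intro p hp
        rw [show p.1 - p.2 = h from (Finset.mem_filter.1 hp).2]
      rw [Finset.sum_congr rfl hc, Finset.sum_const, nsmul_eq_mul]
    rw [Finset.sum_congr rfl step1]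
    rw [Finset.sum_fiberwise_of_maps_to (g := fun p : ℤ × ℤ => p.1 - p.2)
      (fun p hp => by
        rw [Finset.mem_product, Finset.mem_Icc, Finset.mem_Icc] at hp
        rw [hD, Finset.mem_Icc]; omega)
      (fun p => ∑ n ∈ A, (starRingEnd ℂ) (f (n + (p.1 - p.2))) * f n)]
    rw [Finset.sum_congr rfl (fun p hp => E3 p.1 (Finset.mem_product.1 hp).1
        p.2 (Finset.mem_product.1 hp).2)]
    rw [Finset.sum_comm]
    refine Finset.sum_congr rfl ?_
    intro m _
    rw [hF]
    dsimp only
    rw [map_sum, Finset.sum_mul_sum, ← Finset.sum_product', hB]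
  -- Real sum of squares
  set Sr : ℝ := ∑ m ∈ J, Complex.normSq (F m) with hSr
  have hSr0 : 0 ≤ Sr := Finset.sum_nonneg fun m _ => Complex.normSq_nonneg _
  -- value of the tsum
  have E7 : (∑' h : ℤ, ((fejerWeight H h : ℂ) *
        ((Nn : ℂ)⁻¹ * ∑ n ∈ A, (starRingEnd ℂ) (f (n + h)) * f n)))
      = ((((Hn:ℝ)^2)⁻¹ * ((Nn:ℝ))⁻¹ * Sr : ℝ) : ℂ) := by
    rw [E4]
    have : ∑ h ∈ D, ((fejerWeight H h : ℂ) *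
          ((Nn : ℂ)⁻¹ * ∑ n ∈ A, (starRingEnd ℂ) (f (n + h)) * f n))
        = ((Hn:ℂ)^2)⁻¹ * (Nn:ℂ)⁻¹ *
          ∑ h ∈ D, ((((Finset.Icc (1:ℤ) Hn ×ˢ Finset.Icc (1:ℤ) Hn).filter
            (fun p => p.1 - p.2 = h)).card : ℂ))
            * (∑ n ∈ A, (starRingEnd ℂ) (f (n + h)) * f n) := by
      rw [Finset.mul_sum]
      refine Finset.sum_congr rfl ?_
      intro h _
      unfold fejerWeight
      rw [← hHdef]
      push_cast
      ring
    rw [this, E5]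
    have : ∑ m ∈ J, (starRingEnd ℂ) (F m) * F m = ((Sr : ℝ) : ℂ) := by
      rw [hSr]
      push_cast
      refine Finset.sum_congr rfl ?_
      intro m _
      rw [← Complex.normSq_eq_conj_mul_self]
    rw [this]
    push_cast
    ring
  -- Cauchy-Schwarz
  have hNr : (1:ℝ) ≤ (Nn:ℝ) := by exact_mod_cast hNn
  have hHr : (1:ℝ) ≤ (Hn:ℝ) := by exact_mod_cast hHn
  have hNle : (Nn:ℝ) ≤ N := Int.floor_le N
  have hHle : (Hn:ℝ) ≤ H := Int.floor_le H
  have cardJ : ((J.card : ℝ)) = (Nn:ℝ) + (Hn:ℝ) := by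
    rw [hJ, Int.card_Icc]
    have : (Nn + 1 - (1 - Hn)) = Nn + Hn := by ring
    rw [this]
    have h0 : (0:ℤ) ≤ Nn + Hn := by omega
    have h1 := congrArg (fun z : ℤ => (z:ℝ)) (Int.toNat_of_nonneg h0)
    push_cast at h1 ⊢
    linarith [h1]
  have CS : ((Hn:ℝ) * ‖S‖)^2 ≤ ((Nn:ℝ) + (Hn:ℝ)) * Sr := by
    have h1 : ‖(Hn:ℂ) * S‖ ≤ ∑ m ∈ J, ‖F m‖ := by
      rw [← E2]
      exact norm_sum_le _ _
    have h1' : (Hn:ℝ) * ‖S‖ ≤ ∑ m ∈ J, ‖F m‖ := by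
      rw [norm_mul] at h1
      rwa [show ‖(Hn:ℂ)‖ = (Hn:ℝ) from by
        rw [Complex.norm_intCast]; exact abs_of_pos (by positivity)] at h1
    have h2 : (∑ m ∈ J, ‖F m‖)^2
        ≤ (J.card : ℝ) * ∑ m ∈ J, (‖F m‖)^2 :=
      sq_sum_le_card_mul_sum_sq
    have h3 : ∑ m ∈ J, (‖F m‖)^2 = Sr := by
      rw [hSr]
      exact Finset.sum_congr rfl fun m _ => Complex.sq_norm _
    calc ((Hn:ℝ) * ‖S‖)^2 ≤ (∑ m ∈ J, ‖F m‖)^2 :=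
          pow_le_pow_left₀ (by positivity) h1' 2
      _ ≤ (J.card : ℝ) * ∑ m ∈ J, (‖F m‖)^2 := h2
      _ = ((Nn:ℝ) + (Hn:ℝ)) * Sr := by rw [cardJ, h3]
  -- assemble
  rw [E7, Complex.ofReal_re]
  have lhs_eq : ‖(Nn:ℂ)⁻¹ * S‖^2 = (‖S‖)^2 * (((Nn:ℝ))^2)⁻¹ := by
    rw [norm_mul, norm_inv, Complex.norm_intCast, abs_of_pos (by positivity : (0:ℝ) < (Nn:ℝ))]
    ring
  rw [lhs_eq]
  have rhs_eq : (N + H) / (Nn:ℝ) * (((Hn:ℝ)^2)⁻¹ * ((Nn:ℝ))⁻¹ * Sr)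
      = ((N + H) * Sr * (((Hn:ℝ))^2)⁻¹) * (((Nn:ℝ))^2)⁻¹ := by
    ring
  rw [rhs_eq]
  apply mul_le_mul_of_nonneg_right _ (by positivity)
  rw [← div_eq_mul_inv]
  rw [le_div_iff₀ (by positivity)]
  nlinarith [CS, hSr0]
end
end

section
/- Let N ≥ 1 be an integer and f : {1,...,N} → ℂ with |f(n)| ≤ 1 for all n, and let δ ∈ (0,1). If ‖f‖_{U²[N]} ≥ δ, then there exists α ∈ ℝ such that |(1/N) ∑_{n=1}^N f(n) e(−αn)| ≫ δ², where e(x) = e^{2πix} and the implied constant is absolute. -/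
noncomputable section

open scoped Classical

/-- `e(x) = e^{2πix}`. -/
def e (x : ℝ) : ℂ := Complex.exp (2 * Real.pi * Complex.I * x)

/-- The Gowers box sum `∑_{x,h₁,…,h_s} ∏_{ω ∈ {0,1}^s} f_ω(x + ω·(h₁,…,h_s))`. -/
def gowersInner (s : ℕ) (f : (Fin s → Bool) → ℤ → ℂ) : ℂ :=
  ∑' p : ℤ × (Fin s → ℤ), ∏ ω : Fin s → Bool,
    f ω (p.1 + ∑ i, if ω i then p.2 i else 0)

/-- `C^{|ω|} f`, i.e. `f` conjugated `|ω|` times. -/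
def conjPow (s : ℕ) (ω : Fin s → Bool) (f : ℤ → ℂ) : ℤ → ℂ :=
  if Odd ((Finset.univ.filter (fun i => ω i = true)).card) then fun n => (starRingEnd ℂ) (f n)
  else f

/-- The unnormalised Gowers `Ũ^s(ℤ)` norm. -/
def gowersUnnorm (s : ℕ) (f : ℤ → ℂ) : ℝ :=
  (gowersInner s (fun ω => conjPow s ω f)).re ^ ((1 : ℝ) / 2 ^ s)

/-- The normalised Gowers `U^s[N]` norm. -/
def gowersUN (s : ℕ) (f : ℤ → ℂ) (N : ℝ) : ℝ :=
  gowersUnnorm s (fun n => if n ∈ Finset.Icc 1 ⌊N⌋ then f n else 0) /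
    gowersUnnorm s (fun n => if n ∈ Finset.Icc 1 ⌊N⌋ then 1 else 0)

open Finset Complex

section Aux

lemma e_add' (x y : ℝ) : e (x + y) = e x * e y := by
  simp [e, mul_add, Complex.exp_add]

lemma e_zero' : e 0 = 1 := by simp [e]

lemma e_conj' (x : ℝ) : (starRingEnd ℂ) (e x) = e (-x) := by
  simp only [e, ← Complex.exp_conj, map_mul, Complex.conj_I, Complex.conj_ofReal,
    map_ofNat, Complex.ofReal_neg]
  ring_nf

lemma e_int' (n : ℤ) : e n = 1 := by
  simp only [e]
  rw [show 2 * (Real.pi:ℂ) * Complex.I * ((n:ℝ):ℂ) = (n:ℤ) * (2 * Real.pi * Complex.I) by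
    push_cast; ring]
  exact Complex.exp_int_mul_two_pi_mul_I n

lemma e_nat_mul' (k : ℕ) (x : ℝ) : e ((k:ℝ) * x) = e x ^ k := by
  simp only [e]
  rw [show 2 * (Real.pi:ℂ) * Complex.I * (((k:ℝ) * x : ℝ):ℂ) =
      (k:ℕ) * (2 * Real.pi * Complex.I * x) by push_cast; ring]
  exact Complex.exp_nat_mul _ k

lemma e_eq_one_iff' (x : ℝ) : e x = 1 ↔ ∃ n : ℤ, x = n := by
  rw [e, Complex.exp_eq_one_iff]
  constructor
  · rintro ⟨n, hn⟩
    refine ⟨n, ?_⟩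
    have h2 : ((2 * Real.pi : ℝ) : ℂ) * Complex.I ≠ 0 := by
      simp [Real.pi_ne_zero, Complex.I_ne_zero]
    have hx : (x : ℂ) = n := by
      apply mul_left_cancel₀ h2
      push_cast
      linear_combination hn
    exact_mod_cast hx
  · rintro ⟨n, hn⟩
    exact ⟨n, by rw [hn]; push_cast; ring⟩

lemma orth (M : ℕ) (hM : 0 < M) (d : ℤ) :
    ∑ k ∈ range M, e ((k : ℝ) * ((d : ℝ) / M)) = if (M:ℤ) ∣ d then (M:ℂ) else 0 := by
  have hMR : (M : ℝ) ≠ 0 := Nat.cast_ne_zero.mpr hM.ne'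
  by_cases h : (M:ℤ) ∣ d
  · obtain ⟨t, ht⟩ := h
    have hdt : (d : ℝ) / M = ((t : ℤ) : ℝ) := by
      rw [ht]; push_cast; field_simp
    rw [if_pos ⟨t, ht⟩]
    simp [hdt, e_nat_mul', e_int']
  · rw [if_neg h]
    have hr1 : e ((d:ℝ)/M) ≠ 1 := by
      rw [Ne, e_eq_one_iff']
      rintro ⟨n, hn⟩
      apply h
      refine ⟨n, ?_⟩
      have h2 : (d : ℝ) = n * M := (div_eq_iff hMR).mp hn
      have h3 : (d : ℤ) = n * M := by exact_mod_cast h2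
      rw [h3]; ring
    have hrM : e ((d:ℝ)/M) ^ M = 1 := by
      rw [← e_nat_mul', show (M:ℝ) * ((d:ℝ)/M) = ((d:ℤ):ℝ) by field_simp]
      exact e_int' d
    simp only [e_nat_mul']
    rw [geom_sum_eq hr1 M, hrM, sub_self, zero_div]

lemma prod_fin2bool (F : (Fin 2 → Bool) → ℂ) :
    ∏ ω, F ω = F ![false,false] * F ![true,false] * F ![false,true] * F ![true,true] := by
  rw [show (univ : Finset (Fin 2 → Bool)) =
      {![false,false], ![true,false], ![false,true], ![true,true]} from by decide]
  rw [prod_insert (by decide), prod_insert (by decide), prod_insert (by decide), prod_singleton]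
  ring

lemma conjPow_ff (g : ℤ → ℂ) : conjPow 2 ![false,false] g = g := by
  rw [conjPow, if_neg]
  rw [show (Finset.univ.filter (fun i => ![false,false] i = true)).card = 0 from by decide]
  decide

lemma conjPow_tt (g : ℤ → ℂ) : conjPow 2 ![true,true] g = g := by
  rw [conjPow, if_neg]
  rw [show (Finset.univ.filter (fun i => ![true,true] i = true)).card = 2 from by decide]
  decide

lemma conjPow_tf (g : ℤ → ℂ) : conjPow 2 ![true,false] g = fun n => (starRingEnd ℂ) (g n) := by
  rw [conjPow, if_pos]
  rw [show (Finset.univ.filter (fun i => ![true,false] i = true)).card = 1 from by decide]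
  decide

lemma conjPow_ft (g : ℤ → ℂ) : conjPow 2 ![false,true] g = fun n => (starRingEnd ℂ) (g n) := by
  rw [conjPow, if_pos]
  rw [show (Finset.univ.filter (fun i => ![false,true] i = true)).card = 1 from by decide]
  decide

lemma summand_eq (g : ℤ → ℂ) (p : ℤ × (Fin 2 → ℤ)) :
    (∏ ω : Fin 2 → Bool, conjPow 2 ω g (p.1 + ∑ i, if ω i then p.2 i else 0)) =
    g p.1 * (starRingEnd ℂ) (g (p.1 + p.2 0)) * (starRingEnd ℂ) (g (p.1 + p.2 1)) *
      g (p.1 + (p.2 0 + p.2 1)) := by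
  rw [prod_fin2bool (fun ω => conjPow 2 ω g (p.1 + ∑ i, if ω i then p.2 i else 0))]
  rw [conjPow_ff, conjPow_tf, conjPow_ft, conjPow_tt]
  simp [Fin.sum_univ_two]

def prodEquiv : (ℤ × (ℤ × ℤ)) ≃ (ℤ × (Fin 2 → ℤ)) where
  toFun q := (q.1, ![q.2.1, q.2.2])
  invFun p := (p.1, (p.2 0, p.2 1))
  left_inv q := by simp
  right_inv p := by
    refine Prod.ext rfl ?_
    funext i
    fin_cases i <;> simp

lemma inner_eq (N : ℕ) (g : ℤ → ℂ)
    (hg : ∀ n ∉ Finset.Icc (1:ℤ) (N:ℤ), g n = 0) :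
    gowersInner 2 (fun ω => conjPow 2 ω g) =
      ∑ x ∈ Finset.Icc (1:ℤ) (N:ℤ), ∑ u ∈ Finset.Icc (1:ℤ) (N:ℤ), ∑ v ∈ Finset.Icc (1:ℤ) (N:ℤ),
        g x * (starRingEnd ℂ) (g u) * (starRingEnd ℂ) (g v) * g (u + v - x) := by
  classical
  set I : Finset ℤ := Finset.Icc (1:ℤ) (N:ℤ) with hI
  set J : Finset ℤ := Finset.Icc (1-(N:ℤ)) ((N:ℤ)-1) with hJ
  have h1 : gowersInner 2 (fun ω => conjPow 2 ω g) =
      ∑ q ∈ I ×ˢ (J ×ˢ J),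
        g q.1 * (starRingEnd ℂ) (g (q.1 + q.2.1)) * (starRingEnd ℂ) (g (q.1 + q.2.2)) *
          g (q.1 + (q.2.1 + q.2.2)) := by
    rw [gowersInner]
    have := (prodEquiv.tsum_eq (fun p : ℤ × (Fin 2 → ℤ) =>
      ∏ ω : Fin 2 → Bool, conjPow 2 ω g (p.1 + ∑ i, if ω i then p.2 i else 0))).symm
    rw [this]
    have h2 : ∀ q : ℤ × ℤ × ℤ,
        (∏ ω : Fin 2 → Bool, conjPow 2 ω g ((prodEquiv q).1 +
          ∑ i, if ω i then (prodEquiv q).2 i else 0)) =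
        g q.1 * (starRingEnd ℂ) (g (q.1 + q.2.1)) * (starRingEnd ℂ) (g (q.1 + q.2.2)) *
          g (q.1 + (q.2.1 + q.2.2)) := by
      intro q
      rw [summand_eq g (prodEquiv q)]
      rfl
    rw [tsum_congr h2]
    apply tsum_eq_sum
    intro q hq
    simp only [Finset.mem_product, not_and_or] at hq
    rcases hq with hq | hq
    · simp [hg q.1 hq]
    · by_cases hx : g q.1 = 0
      · rw [hx]; ring
      · have hxI : q.1 ∈ I := by by_contra hc; exact hx (hg _ hc)
        rw [hI, Finset.mem_Icc] at hxI
        rcases hq with hq | hq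
        · have : g (q.1 + q.2.1) = 0 := by
            apply hg; rw [Finset.mem_Icc]
            rw [hJ, Finset.mem_Icc] at hq; omega
          simp [this]
        · have : g (q.1 + q.2.2) = 0 := by
            apply hg; rw [Finset.mem_Icc]
            rw [hJ, Finset.mem_Icc] at hq; omega
          simp [this]
  rw [h1, Finset.sum_product]
  refine Finset.sum_congr rfl fun x hx => ?_
  rw [Finset.sum_product]
  have hxI : 1 ≤ x ∧ x ≤ (N:ℤ) := by rwa [hI, Finset.mem_Icc] at hx
  have hsub : I ⊆ Finset.Icc (x + (1 - (N:ℤ))) (x + ((N:ℤ) - 1)) := by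
    intro u hu
    rw [hI, Finset.mem_Icc] at hu
    rw [Finset.mem_Icc]; omega
  have stepA : ∀ (F : ℤ → ℂ), (∀ u ∉ I, F u = 0) →
      ∑ a ∈ J, F (x + a) = ∑ u ∈ I, F u := by
    intro F hF
    rw [show (∑ a ∈ J, F (x + a)) =
        ∑ u ∈ J.map (addLeftEmbedding x), F u by rw [Finset.sum_map]; rfl]
    rw [hJ, Finset.map_add_left_Icc]
    exact (Finset.sum_subset hsub (fun u _ hu => hF u (by rwa [hI] at hu))).symm
  rw [show (∑ a ∈ J, ∑ b ∈ J,
      g x * (starRingEnd ℂ) (g (x+a)) * (starRingEnd ℂ) (g (x+b)) * g (x+(a+b))) =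
      ∑ a ∈ J, (fun u => ∑ b ∈ J,
      g x * (starRingEnd ℂ) (g u) * (starRingEnd ℂ) (g (x+b)) * g (u+b)) (x+a) from by
    refine Finset.sum_congr rfl fun a _ => ?_
    simp only
    refine Finset.sum_congr rfl fun b _ => ?_
    rw [show x + (a+b) = (x+a) + b by ring]]
  rw [stepA (fun u => ∑ b ∈ J,
      g x * (starRingEnd ℂ) (g u) * (starRingEnd ℂ) (g (x+b)) * g (u+b)) (by
    intro u hu
    apply Finset.sum_eq_zero
    intro b _
    simp [hg u hu])]
  refine Finset.sum_congr rfl fun u _ => ?_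
  rw [show (∑ b ∈ J, g x * (starRingEnd ℂ) (g u) * (starRingEnd ℂ) (g (x+b)) * g (u+b)) =
      ∑ b ∈ J, (fun v => g x * (starRingEnd ℂ) (g u) * (starRingEnd ℂ) (g v) * g (u+v-x)) (x+b)
      from by
    refine Finset.sum_congr rfl fun b _ => ?_
    simp only
    rw [show u + (x+b) - x = u + b by ring]]
  rw [stepA (fun v => g x * (starRingEnd ℂ) (g u) * (starRingEnd ℂ) (g v) * g (u+v-x))
    (by intro v hv; simp [hg v hv])]

/-- The discrete Fourier coefficient. -/
def cD (N : ℕ) (g : ℤ → ℂ) (k : ℕ) : ℂ :=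
  ∑ n ∈ Finset.Icc (1:ℤ) (N:ℤ), g n * e (-((k:ℝ) / ((2*N : ℕ) : ℝ) * n))

lemma conj_cD (N : ℕ) (g : ℤ → ℂ) (k : ℕ) :
    (starRingEnd ℂ) (cD N g k) =
      ∑ n ∈ Finset.Icc (1:ℤ) (N:ℤ), (starRingEnd ℂ) (g n) * e ((k:ℝ) / ((2*N : ℕ) : ℝ) * n) := by
  rw [cD, map_sum]
  refine Finset.sum_congr rfl fun n _ => ?_
  rw [map_mul, e_conj', neg_neg]

lemma dvd_small (N : ℕ) (d : ℤ) (hd : -(2*(N:ℤ)) + 2 ≤ d ∧ d ≤ 2*(N:ℤ) - 2)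
    (h : ((2*N : ℕ) : ℤ) ∣ d) : d = 0 := by
  by_contra hd0
  have h1 : ((2*N : ℕ) : ℤ) ≤ |d| := Int.le_of_dvd (abs_pos.mpr hd0) ((dvd_abs _ _).mpr h)
  have h2 : ((2*N : ℕ) : ℤ) = 2*(N:ℤ) := by push_cast; ring
  have h3 : |d| ≤ 2*(N:ℤ) - 2 := abs_le.mpr (by omega)
  omega

lemma claimC (N : ℕ) (hN : 1 ≤ N) (g : ℤ → ℂ) :
    ∑ k ∈ range (2*N), cD N g k * (starRingEnd ℂ) (cD N g k) =
      ((2*N : ℕ) : ℂ) * ∑ n ∈ Finset.Icc (1:ℤ) (N:ℤ), g n * (starRingEnd ℂ) (g n) := by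
  set I : Finset ℤ := Finset.Icc (1:ℤ) (N:ℤ) with hI
  have hM : 0 < 2*N := by omega
  have expand : ∀ k : ℕ, cD N g k * (starRingEnd ℂ) (cD N g k) =
      ∑ n1 ∈ I, ∑ n2 ∈ I, (g n1 * (starRingEnd ℂ) (g n2)) *
        e ((k:ℝ) * (((n2 - n1 : ℤ) : ℝ) / ((2*N : ℕ) : ℝ))) := by
    intro k
    rw [conj_cD, cD]
    rw [Finset.sum_mul_sum]
    refine Finset.sum_congr rfl fun n1 _ => Finset.sum_congr rfl fun n2 _ => ?_
    rw [show (k:ℝ) * (((n2 - n1 : ℤ) : ℝ) / ((2*N : ℕ) : ℝ)) =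
      (-((k:ℝ) / ((2*N : ℕ) : ℝ) * n1)) + ((k:ℝ) / ((2*N : ℕ) : ℝ) * n2) by push_cast; ring]
    rw [e_add']
    ring
  calc ∑ k ∈ range (2*N), cD N g k * (starRingEnd ℂ) (cD N g k)
      = ∑ k ∈ range (2*N), ∑ n1 ∈ I, ∑ n2 ∈ I, (g n1 * (starRingEnd ℂ) (g n2)) *
          e ((k:ℝ) * (((n2 - n1 : ℤ) : ℝ) / ((2*N : ℕ) : ℝ))) :=
        Finset.sum_congr rfl fun k _ => expand k
    _ = ∑ n1 ∈ I, ∑ n2 ∈ I, ∑ k ∈ range (2*N), (g n1 * (starRingEnd ℂ) (g n2)) *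
          e ((k:ℝ) * (((n2 - n1 : ℤ) : ℝ) / ((2*N : ℕ) : ℝ))) := by
        rw [Finset.sum_comm]
        exact Finset.sum_congr rfl fun n1 _ => Finset.sum_comm
    _ = ∑ n1 ∈ I, ∑ n2 ∈ I, (g n1 * (starRingEnd ℂ) (g n2)) *
          (if ((2*N : ℕ) : ℤ) ∣ (n2 - n1) then ((2*N : ℕ) : ℂ) else 0) := by
        refine Finset.sum_congr rfl fun n1 _ => Finset.sum_congr rfl fun n2 _ => ?_
        rw [← Finset.mul_sum, orth (2*N) hM (n2 - n1)]
    _ = ∑ n1 ∈ I, ∑ n2 ∈ I,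
          (if n2 = n1 then (g n1 * (starRingEnd ℂ) (g n2)) * ((2*N : ℕ) : ℂ) else 0) := by
        refine Finset.sum_congr rfl fun n1 hn1 => Finset.sum_congr rfl fun n2 hn2 => ?_
        rw [hI, Finset.mem_Icc] at hn1 hn2
        by_cases hc : n2 = n1
        · rw [if_pos hc, if_pos (by rw [hc, sub_self]; exact dvd_zero _)]
        · rw [if_neg hc, if_neg, mul_zero]
          intro hdvd
          exact hc (by have := dvd_small N (n2 - n1) (by omega) hdvd; omega)
    _ = ((2*N : ℕ) : ℂ) * ∑ n ∈ I, g n * (starRingEnd ℂ) (g n) := by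
        rw [Finset.mul_sum]
        refine Finset.sum_congr rfl fun n1 hn1 => ?_
        rw [Finset.sum_ite_eq' I n1 (fun n2 => (g n1 * (starRingEnd ℂ) (g n2)) * ((2*N : ℕ) : ℂ))]
        rw [if_pos hn1]
        ring

lemma claimA (N : ℕ) (hN : 1 ≤ N) (g : ℤ → ℂ)
    (hg : ∀ n ∉ Finset.Icc (1:ℤ) (N:ℤ), g n = 0) :
    ∑ k ∈ range (2*N), (cD N g k * (starRingEnd ℂ) (cD N g k))^2 =
      ((2*N : ℕ) : ℂ) *
        ∑ x ∈ Finset.Icc (1:ℤ) (N:ℤ), ∑ u ∈ Finset.Icc (1:ℤ) (N:ℤ), ∑ v ∈ Finset.Icc (1:ℤ) (N:ℤ),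
          g x * (starRingEnd ℂ) (g u) * (starRingEnd ℂ) (g v) * g (u + v - x) := by
  set I : Finset ℤ := Finset.Icc (1:ℤ) (N:ℤ) with hI
  have hM : 0 < 2*N := by omega
  have expand : ∀ k : ℕ, (cD N g k * (starRingEnd ℂ) (cD N g k))^2 =
      ∑ n1 ∈ I, ∑ n3 ∈ I, ∑ n4 ∈ I, ∑ n2 ∈ I,
        (g n1 * (starRingEnd ℂ) (g n3) * (starRingEnd ℂ) (g n4) * g n2) *
        e ((k:ℝ) * (((n3 + n4 - n1 - n2 : ℤ) : ℝ) / ((2*N : ℕ) : ℝ))) := by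
    intro k
    rw [show (cD N g k * (starRingEnd ℂ) (cD N g k))^2 =
        cD N g k * (starRingEnd ℂ) (cD N g k) * (starRingEnd ℂ) (cD N g k) * cD N g k by ring]
    rw [conj_cD, cD]
    simp only [Finset.sum_mul, Finset.mul_sum]
    refine Finset.sum_congr rfl fun n1 _ => Finset.sum_congr rfl fun n3 _ =>
      Finset.sum_congr rfl fun n4 _ => Finset.sum_congr rfl fun n2 _ => ?_
    rw [show (k:ℝ) * (((n3 + n4 - n1 - n2 : ℤ) : ℝ) / ((2*N : ℕ) : ℝ)) =
      (-((k:ℝ) / ((2*N : ℕ) : ℝ) * n1)) + ((k:ℝ) / ((2*N : ℕ) : ℝ) * n3) +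
      ((k:ℝ) / ((2*N : ℕ) : ℝ) * n4) + (-((k:ℝ) / ((2*N : ℕ) : ℝ) * n2)) by push_cast; ring]
    rw [e_add', e_add', e_add']
    ring
  calc ∑ k ∈ range (2*N), (cD N g k * (starRingEnd ℂ) (cD N g k))^2
      = ∑ k ∈ range (2*N), ∑ n1 ∈ I, ∑ n3 ∈ I, ∑ n4 ∈ I, ∑ n2 ∈ I,
          (g n1 * (starRingEnd ℂ) (g n3) * (starRingEnd ℂ) (g n4) * g n2) *
          e ((k:ℝ) * (((n3 + n4 - n1 - n2 : ℤ) : ℝ) / ((2*N : ℕ) : ℝ))) :=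
        Finset.sum_congr rfl fun k _ => expand k
    _ = ∑ n1 ∈ I, ∑ n3 ∈ I, ∑ n4 ∈ I, ∑ n2 ∈ I, ∑ k ∈ range (2*N),
          (g n1 * (starRingEnd ℂ) (g n3) * (starRingEnd ℂ) (g n4) * g n2) *
          e ((k:ℝ) * (((n3 + n4 - n1 - n2 : ℤ) : ℝ) / ((2*N : ℕ) : ℝ))) := by
        rw [Finset.sum_comm]
        refine Finset.sum_congr rfl fun n1 _ => ?_
        rw [Finset.sum_comm]
        refine Finset.sum_congr rfl fun n3 _ => ?_
        rw [Finset.sum_comm]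
        refine Finset.sum_congr rfl fun n4 _ => ?_
        rw [Finset.sum_comm]
    _ = ∑ n1 ∈ I, ∑ n3 ∈ I, ∑ n4 ∈ I, ∑ n2 ∈ I,
          (g n1 * (starRingEnd ℂ) (g n3) * (starRingEnd ℂ) (g n4) * g n2) *
          (if ((2*N : ℕ) : ℤ) ∣ (n3 + n4 - n1 - n2) then ((2*N : ℕ) : ℂ) else 0) := by
        refine Finset.sum_congr rfl fun n1 _ => Finset.sum_congr rfl fun n3 _ =>
          Finset.sum_congr rfl fun n4 _ => Finset.sum_congr rfl fun n2 _ => ?_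
        rw [← Finset.mul_sum, orth (2*N) hM _]
    _ = ∑ n1 ∈ I, ∑ n3 ∈ I, ∑ n4 ∈ I, ∑ n2 ∈ I,
          (if n2 = n3 + n4 - n1 then
            (g n1 * (starRingEnd ℂ) (g n3) * (starRingEnd ℂ) (g n4) * g n2) * ((2*N : ℕ) : ℂ)
          else 0) := by
        refine Finset.sum_congr rfl fun n1 hn1 => Finset.sum_congr rfl fun n3 hn3 =>
          Finset.sum_congr rfl fun n4 hn4 => Finset.sum_congr rfl fun n2 hn2 => ?_
        rw [hI, Finset.mem_Icc] at hn1 hn3 hn4 hn2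
        by_cases hc : n2 = n3 + n4 - n1
        · rw [if_pos hc, if_pos (by rw [hc]; exact ⟨0, by ring⟩)]
        · rw [if_neg hc, if_neg, mul_zero]
          intro hdvd
          exact hc (by have := dvd_small N _ (by omega) hdvd; omega)
    _ = ∑ n1 ∈ I, ∑ n3 ∈ I, ∑ n4 ∈ I,
          (g n1 * (starRingEnd ℂ) (g n3) * (starRingEnd ℂ) (g n4) * g (n3 + n4 - n1)) *
            ((2*N : ℕ) : ℂ) := by
        refine Finset.sum_congr rfl fun n1 _ => Finset.sum_congr rfl fun n3 _ =>
          Finset.sum_congr rfl fun n4 _ => ?_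
        rw [Finset.sum_ite_eq' I (n3 + n4 - n1)
          (fun n2 => (g n1 * (starRingEnd ℂ) (g n3) * (starRingEnd ℂ) (g n4) * g n2) *
            ((2*N : ℕ) : ℂ))]
        by_cases hc : n3 + n4 - n1 ∈ I
        · rw [if_pos hc]
        · rw [if_neg hc, hg _ hc]
          ring
    _ = ((2*N : ℕ) : ℂ) * ∑ x ∈ I, ∑ u ∈ I, ∑ v ∈ I,
          g x * (starRingEnd ℂ) (g u) * (starRingEnd ℂ) (g v) * g (u + v - x) := by
        rw [Finset.mul_sum]
        refine Finset.sum_congr rfl fun n1 _ => ?_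
        rw [Finset.mul_sum]
        refine Finset.sum_congr rfl fun n3 _ => ?_
        rw [Finset.mul_sum]
        refine Finset.sum_congr rfl fun n4 _ => ?_
        ring

lemma gowers_re (N : ℕ) (hN : 1 ≤ N) (g : ℤ → ℂ)
    (hg : ∀ n ∉ Finset.Icc (1:ℤ) (N:ℤ), g n = 0) :
    (gowersInner 2 (fun ω => conjPow 2 ω g)).re =
      (∑ k ∈ range (2*N), Complex.normSq (cD N g k)^2) / ((2*N : ℕ) : ℝ) := by
  have h1 := claimA N hN g hg
  rw [← inner_eq N g hg] at h1
  have h3 : ∑ k ∈ range (2*N), (cD N g k * (starRingEnd ℂ) (cD N g k))^2 =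
      (((∑ k ∈ range (2*N), Complex.normSq (cD N g k)^2 : ℝ)) : ℂ) := by
    push_cast
    refine Finset.sum_congr rfl fun k _ => ?_
    rw [Complex.mul_conj]
  rw [h3] at h1
  have hMne : ((2*N : ℕ) : ℂ) ≠ 0 := Nat.cast_ne_zero.mpr (by omega)
  have h4 : gowersInner 2 (fun ω => conjPow 2 ω g) =
      (((∑ k ∈ range (2*N), Complex.normSq (cD N g k)^2) / ((2*N : ℕ) : ℝ) : ℝ) : ℂ) := by
    apply mul_left_cancel₀ hMne
    rw [← h1, Complex.ofReal_div, Complex.ofReal_natCast]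
    push_cast at hMne ⊢
    rw [mul_div_cancel₀ _ hMne]
  rw [h4, Complex.ofReal_re]

lemma parseval_re (N : ℕ) (hN : 1 ≤ N) (g : ℤ → ℂ) :
    ∑ k ∈ range (2*N), Complex.normSq (cD N g k) =
      ((2*N : ℕ) : ℝ) * ∑ n ∈ Finset.Icc (1:ℤ) (N:ℤ), Complex.normSq (g n) := by
  have h := claimC N hN g
  have e1 : (((∑ k ∈ range (2*N), Complex.normSq (cD N g k)) : ℝ) : ℂ) =
      ∑ k ∈ range (2*N), cD N g k * (starRingEnd ℂ) (cD N g k) := by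
    push_cast
    exact Finset.sum_congr rfl fun k _ => (Complex.mul_conj _).symm
  have e2 : ((((2*N : ℕ) : ℝ) * ∑ n ∈ Finset.Icc (1:ℤ) (N:ℤ), Complex.normSq (g n) : ℝ) : ℂ) =
      ((2*N : ℕ) : ℂ) * ∑ n ∈ Finset.Icc (1:ℤ) (N:ℤ), g n * (starRingEnd ℂ) (g n) := by
    push_cast
    congr 1
    exact Finset.sum_congr rfl fun n _ => (Complex.mul_conj _).symm
  exact_mod_cast e1.trans (h.trans e2.symm)

end Aux

/-- The classical `U²[N]` inverse theorem. -/
theorem u2_inverse : ∃ c : ℝ, 0 < c ∧ ∀ (N : ℕ), 1 ≤ N → ∀ f : ℤ → ℂ,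
    (∀ n : ℤ, n ∉ Finset.Icc (1:ℤ) (N:ℤ) → f n = 0) → (∀ n, ‖f n‖ ≤ 1) →
    ∀ δ : ℝ, 0 < δ → δ < 1 → δ ≤ gowersUN 2 f N →
    ∃ α : ℝ, c * δ ^ 2 ≤
      ‖(N : ℂ)⁻¹ * ∑ n ∈ Finset.Icc (1:ℤ) (N:ℤ), f n * e (-(α * n))‖ := by
  refine ⟨1/2, by norm_num, ?_⟩
  intro N hN f hsupp hbound δ hδ0 hδ1 hδle
  have hNR : (1:ℝ) ≤ (N:ℝ) := by exact_mod_cast hN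
  have hNpos : (0:ℝ) < (N:ℝ) := by linarith
  have hM2 : ((2*N : ℕ) : ℝ) = 2*(N:ℝ) := by push_cast; ring
  have hMpos : (0:ℝ) < ((2*N : ℕ) : ℝ) := by rw [hM2]; linarith
  set g1 : ℤ → ℂ := fun n => if n ∈ Finset.Icc (1:ℤ) (N:ℤ) then (1:ℂ) else 0 with hg1
  have hg1supp : ∀ n ∉ Finset.Icc (1:ℤ) (N:ℤ), g1 n = 0 := fun n hn => by simp only [hg1]; exact if_neg hn
  -- identify the normalised norm
  have hUN : gowersUN 2 f (N:ℝ) = gowersUnnorm 2 f / gowersUnnorm 2 g1 := by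
    have hfl : ⌊((N:ℕ):ℝ)⌋ = (N:ℤ) := Int.floor_natCast N
    rw [gowersUN]
    congr 1
    · congr 1
      funext n
      rw [hfl]
      by_cases h : n ∈ Finset.Icc (1:ℤ) (N:ℤ)
      · rw [if_pos h]
      · rw [if_neg h, hsupp n h]
    · congr 1
      funext n
      rw [hfl]
  set Rf := ∑ k ∈ range (2*N), Complex.normSq (cD N f k)^2 with hRf
  set R1 := ∑ k ∈ range (2*N), Complex.normSq (cD N g1 k)^2 with hR1
  have hTf := gowers_re N hN f hsupp
  have hT1 := gowers_re N hN g1 hg1supp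
  -- fourth powers
  have hRfnn : 0 ≤ Rf / ((2*N : ℕ) : ℝ) := by
    apply div_nonneg _ hMpos.le
    exact Finset.sum_nonneg fun k _ => sq_nonneg _
  have hAf4 : (gowersUnnorm 2 f)^(4:ℕ) = Rf / ((2*N : ℕ) : ℝ) := by
    rw [gowersUnnorm, hTf, ← Real.rpow_natCast _ 4, ← Real.rpow_mul hRfnn]
    norm_num
  have hR1nn : 0 ≤ R1 / ((2*N : ℕ) : ℝ) := by
    apply div_nonneg _ hMpos.le
    exact Finset.sum_nonneg fun k _ => sq_nonneg _
  have hA14 : (gowersUnnorm 2 g1)^(4:ℕ) = R1 / ((2*N : ℕ) : ℝ) := by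
    rw [gowersUnnorm, hT1, ← Real.rpow_natCast _ 4, ← Real.rpow_mul hR1nn]
    norm_num
  -- lower bound on R1 via the k = 0 term
  have hcD0 : cD N g1 0 = (N:ℂ) := by
    rw [cD]
    have : ∀ n ∈ Finset.Icc (1:ℤ) (N:ℤ), g1 n * e (-(((0:ℕ):ℝ) / ((2*N : ℕ) : ℝ) * n)) = 1 := by
      intro n hn
      rw [show (-(((0:ℕ):ℝ) / ((2*N : ℕ) : ℝ) * n)) = 0 by push_cast; ring]
      rw [e_zero', hg1]
      simp [hn]
    rw [Finset.sum_congr rfl this]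
    rw [Finset.sum_const]
    rw [Int.card_Icc]
    simp
  have hR1low : ((N:ℝ))^4 ≤ R1 := by
    have h0mem : 0 ∈ range (2*N) := by simp; omega
    have hstep : Complex.normSq (cD N g1 0)^2 ≤ R1 :=
      Finset.single_le_sum (f := fun k => Complex.normSq (cD N g1 k)^2)
        (fun k _ => sq_nonneg _) h0mem
    have hns : Complex.normSq (cD N g1 0) = ((N:ℝ))^2 := by
      rw [hcD0, show ((N:ℕ):ℂ) = (((N:ℝ)):ℂ) by push_cast; rfl, Complex.normSq_ofReal]
      ring
    calc ((N:ℝ))^4 = (((N:ℝ))^2)^2 := by ring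
      _ = Complex.normSq (cD N g1 0)^2 := by rw [hns]
      _ ≤ R1 := hstep
  -- positivity of the denominator
  have hR1pos : 0 < R1 / ((2*N : ℕ) : ℝ) := by
    apply div_pos _ hMpos
    calc (0:ℝ) < ((N:ℝ))^4 := by positivity
      _ ≤ R1 := hR1low
  have hBpos : 0 < gowersUnnorm 2 g1 := by
    rw [gowersUnnorm, hT1]
    exact Real.rpow_pos_of_pos hR1pos _
  -- main inequality
  have hδB : δ * gowersUnnorm 2 g1 ≤ gowersUnnorm 2 f := by
    rw [hUN] at hδle
    calc δ * gowersUnnorm 2 g1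
        ≤ (gowersUnnorm 2 f / gowersUnnorm 2 g1) * gowersUnnorm 2 g1 :=
          mul_le_mul_of_nonneg_right hδle hBpos.le
      _ = gowersUnnorm 2 f := by field_simp
  have h4 : δ^4 * (R1 / ((2*N : ℕ) : ℝ)) ≤ Rf / ((2*N : ℕ) : ℝ) := by
    have h1 : (δ * gowersUnnorm 2 g1)^(4:ℕ) ≤ (gowersUnnorm 2 f)^(4:ℕ) := by
      apply pow_le_pow_left₀ _ hδB
      positivity
    rw [mul_pow, hA14, hAf4] at h1
    exact_mod_cast h1
  have hkey : δ^4 * ((N:ℝ))^4 ≤ Rf := by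
    have h5 : δ^4 * (((N:ℝ))^4 / ((2*N : ℕ) : ℝ)) ≤ δ^4 * (R1 / ((2*N : ℕ) : ℝ)) := by
      apply mul_le_mul_of_nonneg_left _ (by positivity)
      gcongr
    have h6 : (δ^4 * ((N:ℝ))^4) / ((2*N : ℕ) : ℝ) ≤ Rf / ((2*N : ℕ) : ℝ) := by
      rw [mul_div_assoc]
      exact le_trans h5 h4
    have h7 := mul_le_mul_of_nonneg_right h6 hMpos.le
    rwa [div_mul_cancel₀ _ hMpos.ne', div_mul_cancel₀ _ hMpos.ne'] at h7
  -- contradiction argument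
  by_contra hcon
  push_neg at hcon
  have habs : ∀ k : ℕ, ‖cD N f k‖ < 1/2 * δ^2 * (N:ℝ) := by
    intro k
    have h := hcon ((k:ℝ) / ((2*N : ℕ) : ℝ))
    have heq : ‖(N : ℂ)⁻¹ * ∑ n ∈ Finset.Icc (1:ℤ) (N:ℤ),
        f n * e (-((k:ℝ) / ((2*N : ℕ) : ℝ) * n))‖ = ‖cD N f k‖ / (N:ℝ) := by
      rw [norm_mul, norm_inv, Complex.norm_natCast, cD]
      ring
    rw [heq] at h
    calc ‖cD N f k‖ = ‖cD N f k‖ / (N:ℝ) * (N:ℝ) := by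
          field_simp
      _ < 1/2 * δ^2 * (N:ℝ) := by
          apply mul_lt_mul_of_pos_right h hNpos
  have hterm : ∀ k ∈ range (2*N), Complex.normSq (cD N f k)^2 ≤
      (1/2 * δ^2 * (N:ℝ))^2 * Complex.normSq (cD N f k) := by
    intro k _
    have h1 : Complex.normSq (cD N f k) ≤ (1/2 * δ^2 * (N:ℝ))^2 := by
      rw [Complex.normSq_eq_norm_sq]
      exact pow_le_pow_left₀ (norm_nonneg _) (habs k).le 2
    calc Complex.normSq (cD N f k)^2
        = Complex.normSq (cD N f k) * Complex.normSq (cD N f k) := by ring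
      _ ≤ (1/2 * δ^2 * (N:ℝ))^2 * Complex.normSq (cD N f k) :=
          mul_le_mul_of_nonneg_right h1 (Complex.normSq_nonneg _)
  have hfb : ∑ n ∈ Finset.Icc (1:ℤ) (N:ℤ), Complex.normSq (f n) ≤ (N:ℝ) := by
    calc ∑ n ∈ Finset.Icc (1:ℤ) (N:ℤ), Complex.normSq (f n)
        ≤ ∑ _n ∈ Finset.Icc (1:ℤ) (N:ℤ), (1:ℝ) := by
          apply Finset.sum_le_sum
          intro n _
          rw [Complex.normSq_eq_norm_sq]
          calc ‖f n‖^2 ≤ 1^2 := pow_le_pow_left₀ (norm_nonneg _) (hbound n) 2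
            _ = 1 := one_pow 2
      _ = (N:ℝ) := by
          rw [Finset.sum_const, Int.card_Icc]
          simp
  have hRfup : Rf ≤ (1/2 * δ^2 * (N:ℝ))^2 * (((2*N : ℕ) : ℝ) * (N:ℝ)) := by
    calc Rf ≤ ∑ k ∈ range (2*N), (1/2 * δ^2 * (N:ℝ))^2 * Complex.normSq (cD N f k) :=
          Finset.sum_le_sum hterm
      _ = (1/2 * δ^2 * (N:ℝ))^2 * ∑ k ∈ range (2*N), Complex.normSq (cD N f k) := by
          rw [Finset.mul_sum]
      _ = (1/2 * δ^2 * (N:ℝ))^2 *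
          (((2*N : ℕ) : ℝ) * ∑ n ∈ Finset.Icc (1:ℤ) (N:ℤ), Complex.normSq (f n)) := by
          rw [parseval_re N hN f]
      _ ≤ (1/2 * δ^2 * (N:ℝ))^2 * (((2*N : ℕ) : ℝ) * (N:ℝ)) := by
          apply mul_le_mul_of_nonneg_left _ (by positivity)
          exact mul_le_mul_of_nonneg_left hfb hMpos.le
  rw [hM2] at hRfup
  nlinarith [pow_pos hδ0 4, pow_pos hNpos 4, hkey]
end
end

section
/- Let X ≥ Y ≥ Y' ≥ 1 be real numbers with Y ≤ X, and let a : ℤ → ℂ satisfy |a(n)| ≤ 1 for all n. Then 𝔼_{m ∈ [−X,X]∩ℤ} |𝔼_{y ∈ [Y]} a(m+y)| ≪ 𝔼_{m ∈ [−X,X]∩ℤ} |𝔼_{y ∈ [Y']} a(m+y)| + Y'/Y + Y/X, where 𝔼 denotes the average over the indicated finite set of integers and the implied constant is absolute. -/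
noncomputable section

private lemma sum_Ioc_consec (f : ℤ → ℂ) {a b c : ℤ} (hab : a ≤ b) (hbc : b ≤ c) :
    (∑ n ∈ Finset.Ioc a b, f n) + ∑ n ∈ Finset.Ioc b c, f n = ∑ n ∈ Finset.Ioc a c, f n := by
  rw [← Finset.sum_union (by rw [Finset.disjoint_left]; intro x hx hx'; simp at hx hx'; omega),
    Finset.Ioc_union_Ioc_eq_Ioc hab hbc]

private lemma abs_sum_le_card (g : ℤ → ℂ) (C : ℝ) (hg : ∀ n, ‖g n‖ ≤ C)
    (s : Finset ℤ) : ‖∑ n ∈ s, g n‖ ≤ s.card * C := by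
  calc ‖∑ n ∈ s, g n‖ ≤ ∑ n ∈ s, ‖g n‖ :=
        norm_sum_le _ _
    _ ≤ ∑ _n ∈ s, C := Finset.sum_le_sum fun n _ => hg n
    _ = s.card * C := by rw [Finset.sum_const, nsmul_eq_mul]

private lemma shift_abs (g : ℤ → ℂ) (C : ℝ) (hg : ∀ n, ‖g n‖ ≤ C)
    (A B t : ℤ) (ht : 0 ≤ t) :
    ‖(∑ n ∈ Finset.Ioc (A + t) (B + t), g n) - ∑ n ∈ Finset.Ioc A B, g n‖
      ≤ 2 * t * C := by
  have hC : 0 ≤ C := le_trans (norm_nonneg (g 0)) (hg 0)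
  have hcard : ∀ U V : ℤ, V - U ≤ t → ((Finset.Ioc U V).card : ℝ) ≤ (t : ℝ) := by
    intro U V h
    rw [Int.card_Ioc]
    have : ((V - U).toNat : ℤ) ≤ t := by omega
    exact_mod_cast this
  have tri : ∀ x y : ℂ, ‖x - y‖ ≤ ‖x‖ + ‖y‖ := fun x y => norm_sub_le x y
  by_cases h : A + t ≤ B
  · have h1 := sum_Ioc_consec g (by omega : A ≤ A + t) h
    have h2 := sum_Ioc_consec g h (by omega : B ≤ B + t)
    have key : (∑ n ∈ Finset.Ioc (A + t) (B + t), g n) - ∑ n ∈ Finset.Ioc A B, g n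
        = (∑ n ∈ Finset.Ioc B (B + t), g n) - ∑ n ∈ Finset.Ioc A (A + t), g n := by
      rw [← h1, ← h2]; ring
    rw [key]
    have b1 := abs_sum_le_card g C hg (Finset.Ioc B (B + t))
    have b2 := abs_sum_le_card g C hg (Finset.Ioc A (A + t))
    have c1 := hcard B (B + t) (by omega)
    have c2 := hcard A (A + t) (by omega)
    have := tri (∑ n ∈ Finset.Ioc B (B + t), g n) (∑ n ∈ Finset.Ioc A (A + t), g n)
    nlinarith [mul_le_mul_of_nonneg_right c1 hC, mul_le_mul_of_nonneg_right c2 hC]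
  · have b1 := abs_sum_le_card g C hg (Finset.Ioc (A + t) (B + t))
    have b2 := abs_sum_le_card g C hg (Finset.Ioc A B)
    have c1 := hcard (A + t) (B + t) (by omega)
    have c2 := hcard A B (by omega)
    have := tri (∑ n ∈ Finset.Ioc (A + t) (B + t), g n) (∑ n ∈ Finset.Ioc A B, g n)
    nlinarith [mul_le_mul_of_nonneg_right c1 hC, mul_le_mul_of_nonneg_right c2 hC]

private lemma sum_shift_eq {M : Type*} [AddCommMonoid M] (g : ℤ → M) (A B t : ℤ) :
    ∑ n ∈ Finset.Ioc A B, g (n + t) = ∑ n ∈ Finset.Ioc (A + t) (B + t), g n := by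
  rw [← Finset.map_add_right_Ioc, Finset.sum_map]
  rfl

private lemma shift_real (F : ℤ → ℝ) (C : ℝ) (hF0 : ∀ n, 0 ≤ F n) (hF : ∀ n, F n ≤ C)
    (A B t : ℤ) (ht : 0 ≤ t) :
    (∑ n ∈ Finset.Ioc A B, F (n + t)) ≤ (∑ n ∈ Finset.Ioc A B, F n) + 2 * t * C := by
  have hg : ∀ n, ‖(F n : ℂ)‖ ≤ C := fun n => by
    rw [Complex.norm_real, Real.norm_eq_abs, abs_of_nonneg (hF0 n)]; exact hF n
  have h := shift_abs (fun n => (F n : ℂ)) C hg A B t ht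
  rw [← sum_shift_eq (fun n => (F n : ℂ)) A B t] at h
  have e : ((∑ n ∈ Finset.Ioc A B, F (n + t) : ℝ) : ℂ)
      - ((∑ n ∈ Finset.Ioc A B, F n : ℝ) : ℂ)
      = (∑ n ∈ Finset.Ioc A B, ((F (n + t) : ℂ)))
        - ∑ n ∈ Finset.Ioc A B, ((F n : ℂ)) := by push_cast; rfl
  rw [← e, ← Complex.ofReal_sub, Complex.norm_real, Real.norm_eq_abs] at h
  have := le_of_abs_le h
  linarith

private lemma Icc_one_eq_Ioc (K : ℤ) : Finset.Icc (1 : ℤ) K = Finset.Ioc 0 K := by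
  ext n; simp [Int.lt_iff_add_one_le]

private lemma card_Ioc_real {K : ℤ} (hK : 0 ≤ K) : (((Finset.Ioc 0 K).card : ℝ)) = (K : ℝ) := by
  rw [Int.card_Ioc]
  have : ((K - 0).toNat : ℤ) = K := by omega
  exact_mod_cast this

private lemma final_arith (u v K K' c X Y Y' : ℝ) (hv : 0 ≤ v)
    (hK' : 0 < K') (hK : 0 < K) (hc : 0 < c) (hX : 0 < X) (hY : 0 < Y) (hY' : 0 < Y')
    (hKY : K ≤ Y) (hYK : Y ≤ 2 * K) (hK'Y' : K' ≤ Y') (hXc : X ≤ c)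
    (Hmain : K' * u ≤ K * v + 2 * K * K * K' + c * (2 * K' * K')) :
    K⁻¹ * u / c ≤ 4 * (K'⁻¹ * v / c + Y' / Y + Y / X) := by
  have h1 : K⁻¹ * u / c = u / (K * c) := by field_simp
  have h2 : K'⁻¹ * v / c = v / (K' * c) := by field_simp
  rw [h1, h2]
  have hA' : u ≤ (K * v + 2 * K ^ 2 * K' + c * (2 * K' ^ 2)) / K' :=
    (le_div_iff₀ hK').mpr (by nlinarith)
  have hA : u / (K * c) ≤ v / (K' * c) + 2 * K / c + 2 * K' / K := by
    rw [div_le_iff₀ (by positivity : (0:ℝ) < K * c)]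
    have heq : (v / (K' * c) + 2 * K / c + 2 * K' / K) * (K * c)
        = (K * v + 2 * K ^ 2 * K' + c * (2 * K' ^ 2)) / K' := by
      field_simp
    rw [heq]
    exact hA'
  have h4 : 2 * K / c ≤ 2 * (Y / X) := by
    have e : 2 * (Y / X) = 2 * Y / X := by ring
    rw [e, div_le_div_iff₀ hc hX]
    nlinarith
  have h5 : 2 * K' / K ≤ 4 * (Y' / Y) := by
    have e : 4 * (Y' / Y) = 4 * Y' / Y := by ring
    rw [e, div_le_div_iff₀ hK hY]
    nlinarith
  have hvc : 0 ≤ v / (K' * c) := by positivity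
  have hyx : 0 ≤ Y / X := by positivity
  have hy'y : 0 ≤ Y' / Y := by positivity
  linarith

set_option maxHeartbeats 1000000 in
/-- Shortening the average: long averages of local averages of a 1-bounded sequence are
controlled by averages over shorter windows, up to the stated error terms. -/
theorem shorten_average : ∃ c : ℝ, 0 < c ∧ ∀ X Y Y' : ℝ, 1 ≤ Y' → Y' ≤ Y → Y ≤ X →
    ∀ a : ℤ → ℂ, (∀ n, ‖a n‖ ≤ 1) →
    (∑ m ∈ Finset.Icc (-⌊X⌋) ⌊X⌋,
        ‖(⌊Y⌋ : ℂ)⁻¹ * ∑ y ∈ Finset.Icc (1:ℤ) ⌊Y⌋, a (m + y)‖) /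
      ((Finset.Icc (-⌊X⌋) ⌊X⌋).card : ℝ) ≤
    c * ((∑ m ∈ Finset.Icc (-⌊X⌋) ⌊X⌋,
        ‖(⌊Y'⌋ : ℂ)⁻¹ * ∑ y ∈ Finset.Icc (1:ℤ) ⌊Y'⌋, a (m + y)‖) /
      ((Finset.Icc (-⌊X⌋) ⌊X⌋).card : ℝ) + Y' / Y + Y / X) := by
  refine ⟨4, by norm_num, ?_⟩
  intro X Y Y' hY'1 hY'Y hYX a ha
  set N : ℤ := ⌊X⌋ with hN
  set K : ℤ := ⌊Y⌋ with hK
  set K' : ℤ := ⌊Y'⌋ with hK'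
  have hK'1 : (1 : ℤ) ≤ K' := Int.le_floor.mpr (by exact_mod_cast hY'1)
  have hKK' : K' ≤ K := Int.floor_le_floor hY'Y
  have hNK : K ≤ N := Int.floor_le_floor hYX
  have hK1 : (1 : ℤ) ≤ K := le_trans hK'1 hKK'
  have hN1 : (1 : ℤ) ≤ N := le_trans hK1 hNK
  have hY'pos : (0:ℝ) < Y' := lt_of_lt_of_le one_pos hY'1
  have hYpos : (0:ℝ) < Y := lt_of_lt_of_le hY'pos hY'Y
  have hXpos : (0:ℝ) < X := lt_of_lt_of_le hYpos hYX
  have hKle : (K : ℝ) ≤ Y := Int.floor_le Y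
  have hYle : Y ≤ 2 * (K : ℝ) := by
    have h1 : Y < (K : ℝ) + 1 := Int.lt_floor_add_one Y
    have h2 : (1 : ℝ) ≤ (K : ℝ) := by exact_mod_cast hK1
    linarith
  have hK'le : (K' : ℝ) ≤ Y' := Int.floor_le Y'
  have hKpos : (0:ℝ) < (K : ℝ) := by exact_mod_cast lt_of_lt_of_le one_pos hK1
  have hK'pos : (0:ℝ) < (K' : ℝ) := by exact_mod_cast lt_of_lt_of_le one_pos hK'1
  have hKK'r : (K' : ℝ) ≤ (K : ℝ) := by exact_mod_cast hKK'
  set M : Finset ℤ := Finset.Icc (-N) N with hM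
  have hcard : ((M.card : ℝ)) = 2 * (N : ℝ) + 1 := by
    rw [hM, Int.card_Icc]
    have h0 : ((N + 1 - -N).toNat : ℤ) = 2 * N + 1 := by omega
    have := congrArg (fun z : ℤ => (z : ℝ)) h0
    push_cast at this
    linarith
  set c : ℝ := 2 * (N : ℝ) + 1 with hc
  have hcpos : (0:ℝ) < c := by
    have : (1:ℝ) ≤ (N : ℝ) := by exact_mod_cast hN1
    rw [hc]; linarith
  have hXc : X ≤ c := by
    have h1 : X < (N : ℝ) + 1 := Int.lt_floor_add_one X
    have h2 : (1:ℝ) ≤ (N : ℝ) := by exact_mod_cast hN1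
    rw [hc]; linarith
  set F : ℤ → ℝ := fun n => ‖∑ y' ∈ Finset.Ioc 0 K', a (n + y')‖ with hF
  have hF0 : ∀ n, 0 ≤ F n := fun n => norm_nonneg _
  have hFB : ∀ n, F n ≤ (K' : ℝ) := by
    intro n
    have := abs_sum_le_card (fun y' => a (n + y')) 1 (fun y' => ha (n + y')) (Finset.Ioc 0 K')
    rw [mul_one, card_Ioc_real (by omega : (0:ℤ) ≤ K')] at this
    exact this
  set u : ℝ := ∑ m ∈ M, ‖∑ y ∈ Finset.Ioc 0 K, a (m + y)‖ with hu
  set v : ℝ := ∑ m ∈ M, F m with hv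
  have hunn : 0 ≤ u := Finset.sum_nonneg fun m _ => norm_nonneg _
  have hvnn : 0 ≤ v := Finset.sum_nonneg fun m _ => hF0 m
  -- rewrite goal sums
  have habsK : ∀ (L : ℤ), (1:ℤ) ≤ L → ∀ z : ℂ,
      ‖(L : ℂ)⁻¹ * z‖ = ((L:ℝ))⁻¹ * ‖z‖ := by
    intro L hL z
    rw [norm_mul, norm_inv, Complex.norm_intCast,
      abs_of_nonneg (by exact_mod_cast (le_trans zero_le_one hL) : (0:ℝ) ≤ (L:ℝ))]
  have eS : (∑ m ∈ M,
      ‖(K : ℂ)⁻¹ * ∑ y ∈ Finset.Icc (1:ℤ) K, a (m + y)‖) = ((K:ℝ))⁻¹ * u := by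
    rw [hu, Finset.mul_sum]
    refine Finset.sum_congr rfl fun m _ => ?_
    rw [Icc_one_eq_Ioc, habsK K hK1]
  have eT : (∑ m ∈ M,
      ‖(K' : ℂ)⁻¹ * ∑ y ∈ Finset.Icc (1:ℤ) K', a (m + y)‖) = ((K':ℝ))⁻¹ * v := by
    rw [hv, Finset.mul_sum]
    refine Finset.sum_congr rfl fun m _ => ?_
    rw [Icc_one_eq_Ioc, habsK K' hK'1]
  -- Step 1 : pointwise
  have step1 : ∀ m : ℤ, (K' : ℝ) * ‖∑ y ∈ Finset.Ioc 0 K, a (m + y)‖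
      ≤ (∑ y ∈ Finset.Ioc 0 K, F (m + y)) + 2 * (K' : ℝ) * (K' : ℝ) := by
    intro m
    set A : ℂ := ∑ y ∈ Finset.Ioc 0 K, a (m + y) with hA
    have key : ‖(K' : ℂ) * A
        - ∑ y ∈ Finset.Ioc 0 K, ∑ y' ∈ Finset.Ioc 0 K', a (m + y + y')‖
        ≤ 2 * (K' : ℝ) * (K' : ℝ) := by
      have swap : (∑ y ∈ Finset.Ioc 0 K, ∑ y' ∈ Finset.Ioc 0 K', a (m + y + y'))
          = ∑ y' ∈ Finset.Ioc 0 K', ∑ y ∈ Finset.Ioc 0 K, a (m + y + y') :=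
        Finset.sum_comm
      have econst : (K' : ℂ) * A = ∑ _y' ∈ Finset.Ioc 0 K', A := by
        rw [Finset.sum_const, Int.card_Ioc, nsmul_eq_mul]
        congr 1
        have h0 : ((K' - 0).toNat : ℤ) = K' := by omega
        exact_mod_cast (congrArg (fun z : ℤ => (z : ℂ)) h0).symm
      rw [swap, econst, ← Finset.sum_sub_distrib]
      calc ‖∑ y' ∈ Finset.Ioc 0 K', (A - ∑ y ∈ Finset.Ioc 0 K, a (m + y + y'))‖
          ≤ ∑ y' ∈ Finset.Ioc 0 K',
              ‖A - ∑ y ∈ Finset.Ioc 0 K, a (m + y + y')‖ :=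
            norm_sum_le _ _
        _ ≤ ∑ _y' ∈ Finset.Ioc 0 K', (2 * (K' : ℝ)) := by
            refine Finset.sum_le_sum fun y' hy' => ?_
            simp only [Finset.mem_Ioc] at hy'
            have hre : (∑ y ∈ Finset.Ioc 0 K, a (m + y + y'))
                = ∑ n ∈ Finset.Ioc (0 + y') (K + y'), a (m + n) := by
              rw [← sum_shift_eq (fun n => a (m + n)) 0 K y']
              refine Finset.sum_congr rfl fun y _ => ?_
              ring_nf
            rw [hre, ← norm_neg, neg_sub]
            have hs := shift_abs (fun n => a (m + n)) 1 (fun n => ha (m + n)) 0 K y'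
              (le_of_lt hy'.1)
            have h2 : (y' : ℝ) ≤ (K' : ℝ) := by exact_mod_cast hy'.2
            calc ‖(∑ n ∈ Finset.Ioc (0 + y') (K + y'), a (m + n)) - A‖
                ≤ 2 * (y' : ℝ) * 1 := hs
              _ ≤ 2 * (K' : ℝ) := by linarith
        _ = 2 * (K' : ℝ) * (K' : ℝ) := by
            rw [Finset.sum_const, nsmul_eq_mul, card_Ioc_real (by omega : (0:ℤ) ≤ K')]
            ring
    have htr := norm_add_le
      ((K' : ℂ) * A - ∑ y ∈ Finset.Ioc 0 K, ∑ y' ∈ Finset.Ioc 0 K', a (m + y + y'))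
      (∑ y ∈ Finset.Ioc 0 K, ∑ y' ∈ Finset.Ioc 0 K', a (m + y + y'))
    rw [sub_add_cancel] at htr
    have e1 : ‖(K' : ℂ) * A‖ = (K' : ℝ) * ‖A‖ := by
      rw [norm_mul, Complex.norm_intCast, abs_of_nonneg (le_of_lt hK'pos)]
    have e2 : ‖∑ y ∈ Finset.Ioc 0 K, ∑ y' ∈ Finset.Ioc 0 K', a (m + y + y')‖
        ≤ ∑ y ∈ Finset.Ioc 0 K, ‖∑ y' ∈ Finset.Ioc 0 K', a (m + y + y')‖ :=
      norm_sum_le _ _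
    have e3 : (∑ y ∈ Finset.Ioc 0 K, ‖∑ y' ∈ Finset.Ioc 0 K', a (m + y + y')‖)
        = ∑ y ∈ Finset.Ioc 0 K, F (m + y) := by
      refine Finset.sum_congr rfl fun y _ => ?_
      rw [hF]
    rw [← e1]
    linarith
  -- Step 2 : sum over m, swap, shift
  have step2 : (∑ m ∈ M, ∑ y ∈ Finset.Ioc 0 K, F (m + y))
      ≤ (K : ℝ) * v + 2 * (K : ℝ) * (K : ℝ) * (K' : ℝ) := by
    rw [Finset.sum_comm]
    have per_y : ∀ y ∈ Finset.Ioc (0:ℤ) K,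
        (∑ m ∈ M, F (m + y)) ≤ v + 2 * (K : ℝ) * (K' : ℝ) := by
      intro y hy
      simp only [Finset.mem_Ioc] at hy
      have hMIoc : M = Finset.Ioc (-N - 1) N := by
        rw [hM]; ext n; simp only [Finset.mem_Icc, Finset.mem_Ioc]; omega
      have hsh := shift_real F (K' : ℝ) hF0 hFB (-N - 1) N y (le_of_lt hy.1)
      rw [← hMIoc] at hsh
      have hy2 : (y : ℝ) ≤ (K : ℝ) := by exact_mod_cast hy.2
      calc (∑ m ∈ M, F (m + y)) ≤ v + 2 * (y : ℝ) * (K' : ℝ) := hsh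
        _ ≤ v + 2 * (K : ℝ) * (K' : ℝ) := by nlinarith
    calc (∑ y ∈ Finset.Ioc (0:ℤ) K, ∑ m ∈ M, F (m + y))
        ≤ ∑ _y ∈ Finset.Ioc (0:ℤ) K, (v + 2 * (K : ℝ) * (K' : ℝ)) :=
          Finset.sum_le_sum per_y
      _ = (K : ℝ) * (v + 2 * (K : ℝ) * (K' : ℝ)) := by
          rw [Finset.sum_const, nsmul_eq_mul, card_Ioc_real (by omega : (0:ℤ) ≤ K)]
      _ = (K : ℝ) * v + 2 * (K : ℝ) * (K : ℝ) * (K' : ℝ) := by ring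
  -- Main inequality
  have Hmain : (K' : ℝ) * u ≤ (K : ℝ) * v + 2 * (K : ℝ) * (K : ℝ) * (K' : ℝ)
      + c * (2 * (K' : ℝ) * (K' : ℝ)) := by
    have h1 : (K' : ℝ) * u ≤ (∑ m ∈ M, ∑ y ∈ Finset.Ioc 0 K, F (m + y))
        + (M.card : ℝ) * (2 * (K' : ℝ) * (K' : ℝ)) := by
      rw [hu, Finset.mul_sum]
      calc (∑ m ∈ M, (K' : ℝ) * ‖∑ y ∈ Finset.Ioc 0 K, a (m + y)‖)
          ≤ ∑ m ∈ M, ((∑ y ∈ Finset.Ioc 0 K, F (m + y)) + 2 * (K' : ℝ) * (K' : ℝ)) :=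
            Finset.sum_le_sum fun m _ => step1 m
        _ = (∑ m ∈ M, ∑ y ∈ Finset.Ioc 0 K, F (m + y))
            + (M.card : ℝ) * (2 * (K' : ℝ) * (K' : ℝ)) := by
            rw [Finset.sum_add_distrib, Finset.sum_const, nsmul_eq_mul]
    rw [hcard] at h1
    linarith [step2]
  -- Finish : clear denominators
  rw [hcard, eS, eT]
  exact final_arith u v (K:ℝ) (K':ℝ) c X Y Y' hvnn hK'pos hKpos hcpos hXpos hYpos hY'pos
    hKle hYle hK'le hXc Hmain
end
end

section
/- Let r ∈ ℕ with ω(r) ≤ (log log N)^{3/2}, where ω(r) is the number of distinct prime factors of r and N ≥ 16. Then ∑_{u | r} u^{−1/2} ≤ exp(O((log log N)^{3/4})) ≪ log N. -/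
noncomputable section

open Finset

namespace DivSumAux

lemma rpow_eq_inv_sqrt (n : ℕ) : (n:ℝ) ^ (-(1:ℝ)/2) = (Real.sqrt n)⁻¹ := by
  rw [Real.sqrt_eq_rpow, ← Real.rpow_neg (Nat.cast_nonneg n)]
  norm_num

lemma sum_sqrt_inv_le : ∀ S : Finset ℕ, (∀ s ∈ S, 2 ≤ s) →
    ∑ s ∈ S, (Real.sqrt s)⁻¹ ≤ 2 * Real.sqrt (S.card + 1) := by
  intro S
  induction S using Finset.induction_on_max with
  | empty => intro _; simp
  | insert a S hlt ih =>
    intro h2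
    have haS : a ∉ S := fun h => lt_irrefl a (hlt a h)
    have hsub : S ⊆ Finset.Ico 2 a := fun s hs =>
      Finset.mem_Ico.2 ⟨h2 s (Finset.mem_insert_of_mem hs), hlt s hs⟩
    have ha2 : 2 ≤ a := h2 a (Finset.mem_insert_self a S)
    have hcard : S.card + 2 ≤ a := by
      have := Finset.card_le_card hsub
      simp [Nat.card_Ico] at this
      omega
    rw [Finset.sum_insert haS, Finset.card_insert_of_notMem haS]
    have hih := ih (fun s hs => h2 s (Finset.mem_insert_of_mem hs))
    set n := S.card with hn
    have hs1 : Real.sqrt (n + 1) ^ 2 = (n:ℝ) + 1 := Real.sq_sqrt (by positivity)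
    have hs2 : Real.sqrt (n + 2) ^ 2 = (n:ℝ) + 2 := Real.sq_sqrt (by positivity)
    have hs2pos : 0 < Real.sqrt (n + 2) := Real.sqrt_pos.2 (by positivity)
    have hs1nn : 0 ≤ Real.sqrt (n + 1) := Real.sqrt_nonneg _
    have hinva : (Real.sqrt a)⁻¹ ≤ (Real.sqrt (n + 2))⁻¹ := by
      apply inv_anti₀ hs2pos
      apply Real.sqrt_le_sqrt
      exact_mod_cast hcard
    have key : (Real.sqrt (n + 2))⁻¹ + 2 * Real.sqrt (n + 1) ≤ 2 * Real.sqrt (n + 2) := by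
      rw [inv_eq_one_div, div_add' _ _ _ (ne_of_gt hs2pos), div_le_iff₀ hs2pos]
      nlinarith [sq_nonneg (Real.sqrt (n+1) - Real.sqrt (n+2))]
    have : ((n:ℝ) + 1) + 1 = (n:ℝ) + 2 := by ring
    push_cast
    calc (Real.sqrt a)⁻¹ + ∑ s ∈ S, (Real.sqrt s)⁻¹
        ≤ (Real.sqrt (n + 2))⁻¹ + 2 * Real.sqrt (n + 1) := by
          exact add_le_add hinva hih
      _ ≤ 2 * Real.sqrt (n + 2) := key
      _ = 2 * Real.sqrt ((n:ℝ) + 1 + 1) := by rw [show ((n:ℝ)+1+1) = ((n:ℝ)+2) by ring]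

/-- the arithmetic function `n ↦ n^{-1/2}` -/
def g : ArithmeticFunction ℝ :=
  ⟨fun n => (n:ℝ) ^ (-(1:ℝ)/2), by
    show ((0:ℕ):ℝ) ^ (-(1:ℝ)/2) = 0
    rw [Nat.cast_zero, Real.zero_rpow (by norm_num)]⟩

lemma g_apply (n : ℕ) : g n = (n:ℝ) ^ (-(1:ℝ)/2) := rfl

lemma g_mult : g.IsMultiplicative := by
  constructor
  · show ((1:ℕ):ℝ) ^ (-(1:ℝ)/2) = 1
    rw [Nat.cast_one, Real.one_rpow]
  · intro m n _
    show ((m*n:ℕ):ℝ) ^ (-(1:ℝ)/2) = ((m:ℕ):ℝ) ^ (-(1:ℝ)/2) * ((n:ℕ):ℝ) ^ (-(1:ℝ)/2)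
    push_cast
    exact Real.mul_rpow (Nat.cast_nonneg m) (Nat.cast_nonneg n)

lemma geom_bound {y : ℝ} (hy0 : 0 ≤ y) (hy1 : y < 1) (n : ℕ) :
    ∑ i ∈ Finset.range n, y ^ i ≤ (1 - y)⁻¹ := by
  have h1y : 0 < 1 - y := by linarith
  have hgs := geom_sum_mul y n
  have hpow : 0 ≤ y ^ n := pow_nonneg hy0 n
  rw [inv_eq_one_div, le_div_iff₀ h1y]
  nlinarith

lemma sum_divisors_le_prod (r : ℕ) (hr : r ≠ 0) :
    ∑ u ∈ r.divisors, (u:ℝ) ^ (-(1:ℝ)/2) ≤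
      ∏ p ∈ r.primeFactors, (1 - (p:ℝ) ^ (-(1:ℝ)/2))⁻¹ := by
  have hF : (((ArithmeticFunction.zeta : ArithmeticFunction ℕ) :
      ArithmeticFunction ℝ) * g).IsMultiplicative :=
    ArithmeticFunction.isMultiplicative_zeta.natCast.mul g_mult
  have heq : ∑ u ∈ r.divisors, (u:ℝ) ^ (-(1:ℝ)/2) =
      (((ArithmeticFunction.zeta : ArithmeticFunction ℕ) : ArithmeticFunction ℝ) * g) r := by
    rw [ArithmeticFunction.coe_zeta_mul_apply]
    exact Finset.sum_congr rfl fun u _ => (g_apply u).symm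
  rw [heq, hF.multiplicative_factorization _ hr, Finsupp.prod]
  apply Finset.prod_le_prod
  · intro p hp
    rw [ArithmeticFunction.coe_zeta_mul_apply]
    exact Finset.sum_nonneg fun u _ => Real.rpow_nonneg (Nat.cast_nonneg u) _
  · intro p hp
    rw [Nat.support_factorization] at hp
    have hpp : p.Prime := Nat.prime_of_mem_primeFactors hp
    have hy0 : (0:ℝ) ≤ (p:ℝ) ^ (-(1:ℝ)/2) := Real.rpow_nonneg (Nat.cast_nonneg p) _
    have hy1 : (p:ℝ) ^ (-(1:ℝ)/2) < 1 := by
      apply Real.rpow_lt_one_of_one_lt_of_neg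
      · exact_mod_cast hpp.one_lt
      · norm_num
    rw [ArithmeticFunction.coe_zeta_mul_apply, Nat.sum_divisors_prime_pow hpp]
    have hgp : ∀ i : ℕ, g (p ^ i) = ((p:ℝ) ^ (-(1:ℝ)/2)) ^ i := by
      intro i
      rw [g_apply, Nat.cast_pow, ← Real.rpow_natCast ((p:ℝ)) i,
        ← Real.rpow_mul (Nat.cast_nonneg p), mul_comm,
        Real.rpow_mul (Nat.cast_nonneg p), Real.rpow_natCast]
    calc ∑ i ∈ Finset.range (r.factorization p + 1), g (p ^ i)
        = ∑ i ∈ Finset.range (r.factorization p + 1), ((p:ℝ) ^ (-(1:ℝ)/2)) ^ i := by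
          exact Finset.sum_congr rfl fun i _ => hgp i
      _ ≤ (1 - (p:ℝ) ^ (-(1:ℝ)/2))⁻¹ := geom_bound hy0 hy1 _

lemma inv_one_sub_le_exp {y : ℝ} (hy0 : 0 ≤ y) (hy : y ≤ 3/4) :
    (1 - y)⁻¹ ≤ Real.exp (4 * y) := by
  have h1y : 0 < 1 - y := by linarith
  have hexp : 1 + 4 * y ≤ Real.exp (4 * y) := by
    have := Real.add_one_le_exp (4 * y); linarith
  rw [inv_eq_one_div, div_le_iff₀ h1y]
  nlinarith [Real.exp_pos (4*y)]

lemma prime_rpow_le (p : ℕ) (hp : 2 ≤ p) : (p:ℝ) ^ (-(1:ℝ)/2) ≤ 3/4 := by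
  rw [rpow_eq_inv_sqrt]
  have h43 : (4:ℝ)/3 ≤ Real.sqrt 2 := by
    rw [show (4:ℝ)/3 = Real.sqrt ((4/3)^2) from (Real.sqrt_sq (by norm_num)).symm]
    exact Real.sqrt_le_sqrt (by norm_num)
  have h2p : Real.sqrt 2 ≤ Real.sqrt p := Real.sqrt_le_sqrt (by exact_mod_cast hp)
  have hpos : (0:ℝ) < Real.sqrt p := lt_of_lt_of_le (by linarith) h2p
  rw [inv_le_comm₀ _ (by norm_num)]
  · linarith
  · exact hpos

theorem divisor_sum_inv_sqrt : ∃ c : ℝ, 0 < c ∧ ∀ N : ℕ, 16 ≤ N → ∀ r : ℕ, 0 < r →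
    (r.primeFactors.card : ℝ) ≤ Real.log (Real.log N) ^ ((3 : ℝ) / 2) →
    (∑ u ∈ r.divisors, (u : ℝ) ^ (-(1 : ℝ) / 2)) ≤
        Real.exp (c * Real.log (Real.log N) ^ ((3 : ℝ) / 4)) ∧
    (∑ u ∈ r.divisors, (u : ℝ) ^ (-(1 : ℝ) / 2)) ≤ c * Real.log N := by
  refine ⟨Real.exp 20736, Real.exp_pos _, fun N hN r hr hcard => ?_⟩
  set x := Real.log (Real.log N) with hxdef
  have hN1 : (1:ℝ) < N := by exact_mod_cast lt_of_lt_of_le (by norm_num) hN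
  have hlogN : 0 < Real.log N := Real.log_pos hN1
  have hx1 : 1 ≤ x := by
    rw [hxdef, Real.le_log_iff_exp_le hlogN]
    have h16 : Real.log 16 ≤ Real.log N :=
      Real.log_le_log (by norm_num) (by exact_mod_cast hN)
    have hlog16 : Real.log 16 = 4 * Real.log 2 := by
      rw [show (16:ℝ) = 2^(4:ℕ) by norm_num, Real.log_pow]
      push_cast; ring
    have := Real.log_two_gt_d9
    have := Real.exp_one_lt_d9
    rw [hlog16] at h16
    linarith
  have hx0 : (0:ℝ) ≤ x := by linarith
  -- the number-theoretic bound
  have hstep : ∑ u ∈ r.divisors, (u:ℝ) ^ (-(1:ℝ)/2) ≤ Real.exp (12 * x ^ ((3:ℝ)/4)) := by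
    have h1 := sum_divisors_le_prod r hr.ne'
    have h2 : ∏ p ∈ r.primeFactors, (1 - (p:ℝ) ^ (-(1:ℝ)/2))⁻¹ ≤
        Real.exp (∑ p ∈ r.primeFactors, 4 * (p:ℝ) ^ (-(1:ℝ)/2)) := by
      rw [Real.exp_sum]
      apply Finset.prod_le_prod
      · intro p hp
        have hpp := Nat.prime_of_mem_primeFactors hp
        have hle := prime_rpow_le p hpp.two_le
        have h0 := Real.rpow_nonneg (Nat.cast_nonneg p) (-(1:ℝ)/2)
        have hpos : (0:ℝ) < 1 - (p:ℝ) ^ (-(1:ℝ)/2) := by linarith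
        positivity
      · intro p hp
        have hpp := Nat.prime_of_mem_primeFactors hp
        exact inv_one_sub_le_exp (Real.rpow_nonneg (Nat.cast_nonneg p) _)
          (prime_rpow_le p hpp.two_le)
    have h3 : ∑ p ∈ r.primeFactors, 4 * (p:ℝ) ^ (-(1:ℝ)/2) ≤
        8 * Real.sqrt (r.primeFactors.card + 1) := by
      have := sum_sqrt_inv_le r.primeFactors
        (fun p hp => (Nat.prime_of_mem_primeFactors hp).two_le)
      calc ∑ p ∈ r.primeFactors, 4 * (p:ℝ) ^ (-(1:ℝ)/2)
          = 4 * ∑ p ∈ r.primeFactors, (Real.sqrt p)⁻¹ := by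
            rw [Finset.mul_sum]
            exact Finset.sum_congr rfl fun p _ => by rw [rpow_eq_inv_sqrt]
        _ ≤ 4 * (2 * Real.sqrt (r.primeFactors.card + 1)) := by linarith
        _ = 8 * Real.sqrt (r.primeFactors.card + 1) := by ring
    have h4 : Real.sqrt ((r.primeFactors.card : ℝ) + 1) ≤ Real.sqrt 2 * x ^ ((3:ℝ)/4) := by
      have hx32 : (1:ℝ) ≤ x ^ ((3:ℝ)/2) := by
        calc (1:ℝ) = x ^ (0:ℝ) := (Real.rpow_zero x).symm
          _ ≤ x ^ ((3:ℝ)/2) := Real.rpow_le_rpow_of_exponent_le hx1 (by norm_num)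
      have hk : (r.primeFactors.card : ℝ) + 1 ≤ 2 * x ^ ((3:ℝ)/2) := by linarith
      calc Real.sqrt ((r.primeFactors.card : ℝ) + 1)
          ≤ Real.sqrt (2 * x ^ ((3:ℝ)/2)) := Real.sqrt_le_sqrt hk
        _ = Real.sqrt 2 * Real.sqrt (x ^ ((3:ℝ)/2)) := Real.sqrt_mul (by norm_num) _
        _ = Real.sqrt 2 * x ^ ((3:ℝ)/4) := by
            rw [Real.sqrt_eq_rpow (x ^ ((3:ℝ)/2)), ← Real.rpow_mul hx0]
            norm_num
    have hsqrt2 : Real.sqrt 2 ≤ 3/2 := by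
      rw [show (3:ℝ)/2 = Real.sqrt ((3/2)^2) from (Real.sqrt_sq (by norm_num)).symm]
      exact Real.sqrt_le_sqrt (by norm_num)
    have hx34 : (0:ℝ) ≤ x ^ ((3:ℝ)/4) := Real.rpow_nonneg hx0 _
    have h5 : 8 * Real.sqrt ((r.primeFactors.card : ℝ) + 1) ≤ 12 * x ^ ((3:ℝ)/4) := by
      calc 8 * Real.sqrt ((r.primeFactors.card : ℝ) + 1)
          ≤ 8 * (Real.sqrt 2 * x ^ ((3:ℝ)/4)) := by linarith
        _ ≤ 12 * x ^ ((3:ℝ)/4) := by nlinarith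
    calc ∑ u ∈ r.divisors, (u:ℝ) ^ (-(1:ℝ)/2)
        ≤ Real.exp (∑ p ∈ r.primeFactors, 4 * (p:ℝ) ^ (-(1:ℝ)/2)) := h1.trans h2
      _ ≤ Real.exp (12 * x ^ ((3:ℝ)/4)) := Real.exp_le_exp.2 (by push_cast at h3 ⊢; linarith)
  have hx34 : (0:ℝ) ≤ x ^ ((3:ℝ)/4) := Real.rpow_nonneg hx0 _
  have hmain : 12 * x ^ ((3:ℝ)/4) ≤ x + 20736 := by
    rcases le_or_gt x 20736 with hle | hgt
    · have h1 : x ^ ((3:ℝ)/4) ≤ (20736:ℝ) ^ ((3:ℝ)/4) :=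
        Real.rpow_le_rpow hx0 hle (by norm_num)
      have h2 : (20736:ℝ) ^ ((3:ℝ)/4) = 1728 := by
        rw [show (20736:ℝ) = (12:ℝ) ^ (4:ℕ) by norm_num, ← Real.rpow_natCast (12:ℝ) 4,
          ← Real.rpow_mul (by norm_num : (0:ℝ) ≤ 12)]
        rw [show ((4:ℕ):ℝ) * ((3:ℝ)/4) = ((3:ℕ):ℝ) by push_cast; ring, Real.rpow_natCast]
        norm_num
      rw [h2] at h1
      linarith
    · have hxpos : 0 < x := by linarith
      have h14 : (12:ℝ) ≤ x ^ ((1:ℝ)/4) := by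
        have h2 : (20736:ℝ) ^ ((1:ℝ)/4) = 12 := by
          rw [show (20736:ℝ) = (12:ℝ) ^ (4:ℕ) by norm_num, ← Real.rpow_natCast (12:ℝ) 4,
            ← Real.rpow_mul (by norm_num : (0:ℝ) ≤ 12)]
          rw [show ((4:ℕ):ℝ) * ((1:ℝ)/4) = ((1:ℕ):ℝ) by push_cast; ring, Real.rpow_natCast]
          norm_num
        rw [← h2]
        exact Real.rpow_le_rpow (by norm_num) hgt.le (by norm_num)
      have hsplit : x ^ ((1:ℝ)/4) * x ^ ((3:ℝ)/4) = x := by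
        rw [← Real.rpow_add hxpos]
        norm_num
      nlinarith
  constructor
  · apply hstep.trans
    apply Real.exp_le_exp.2
    apply mul_le_mul_of_nonneg_right _ hx34
    calc (12:ℝ) ≤ Real.exp 12 := by
          have := Real.add_one_le_exp (12:ℝ); linarith
      _ ≤ Real.exp 20736 := Real.exp_le_exp.2 (by norm_num)
  · calc ∑ u ∈ r.divisors, (u:ℝ) ^ (-(1:ℝ)/2)
        ≤ Real.exp (12 * x ^ ((3:ℝ)/4)) := hstep
      _ ≤ Real.exp (x + 20736) := Real.exp_le_exp.2 hmain
      _ = Real.exp 20736 * Real.exp x := by rw [← Real.exp_add]; ring_nf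
      _ = Real.exp 20736 * Real.log N := by rw [hxdef, Real.exp_log hlogN]

end DivSumAux

/-- If `ω(r) ≤ (log log N)^{3/2}` then `∑_{u ∣ r} u^{-1/2} ≤ exp(O((log log N)^{3/4})) ≪ log N`. -/
theorem divisor_sum_inv_sqrt : ∃ c : ℝ, 0 < c ∧ ∀ N : ℕ, 16 ≤ N → ∀ r : ℕ, 0 < r →
    (r.primeFactors.card : ℝ) ≤ Real.log (Real.log N) ^ ((3 : ℝ) / 2) →
    (∑ u ∈ r.divisors, (u : ℝ) ^ (-(1 : ℝ) / 2)) ≤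
        Real.exp (c * Real.log (Real.log N) ^ ((3 : ℝ) / 4)) ∧
    (∑ u ∈ r.divisors, (u : ℝ) ^ (-(1 : ℝ) / 2)) ≤ c * Real.log N := by
  exact DivSumAux.divisor_sum_inv_sqrt
end
end

section
/- Let B ≥ 40 be real, let (X, ν) be a probability space, and for each integer N ≥ 1 let A_N : X → ℂ be measurable. Suppose (1) ‖A_N‖_{L¹(X)} ≪ (log N)^{−B} for all N ≥ 3, and (2) for all 3 ≤ N < M ≤ N(1 + (log N)^{−(B/2−1)}) and ν-almost every x, |A_M(x) − A_N(x)| ≤ (log N)^{B/10 − B/2 + 1}. Then for ν-almost every x ∈ X, lim_{N→∞} (log N)^{2B/5 − 2} |A_N(x)| = 0. -/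
noncomputable section

open MeasureTheory Filter Real

namespace LacunaryTrickAux

/-- auxiliary sequence of logarithms -/
def lacL (p : ℝ) (j : ℕ) : ℝ := ((j : ℝ) + 1) ^ p

/-- the lacunary sequence -/
def lacN (p : ℝ) (j : ℕ) : ℕ := ⌈Real.exp (lacL p j)⌉₊

variable {p : ℝ}

lemma one_le_m (j : ℕ) : (1 : ℝ) ≤ (j : ℝ) + 1 := by
  have : (0:ℝ) ≤ (j:ℝ) := j.cast_nonneg; linarith

lemma m_pos (j : ℕ) : (0 : ℝ) < (j : ℝ) + 1 := lt_of_lt_of_le one_pos (one_le_m j)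

lemma one_le_lacL (hp0 : 0 ≤ p) (j : ℕ) : 1 ≤ lacL p j :=
  Real.one_le_rpow (one_le_m j) hp0

lemma lacL_pos (hp0 : 0 ≤ p) (j : ℕ) : 0 < lacL p j :=
  lt_of_lt_of_le one_pos (one_le_lacL hp0 j)

lemma lacN_lb (j : ℕ) : Real.exp (lacL p j) ≤ (lacN p j : ℝ) := Nat.le_ceil _

lemma lacN_ub (j : ℕ) : (lacN p j : ℝ) < Real.exp (lacL p j) + 1 :=
  Nat.ceil_lt_add_one (Real.exp_pos _).le

lemma three_le_lacN (hp0 : 0 ≤ p) (j : ℕ) : 3 ≤ lacN p j := by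
  have h1 : (2 : ℝ) < Real.exp (lacL p j) := by
    have h2 : Real.exp 1 ≤ Real.exp (lacL p j) :=
      Real.exp_le_exp.2 (one_le_lacL hp0 j)
    have := Real.exp_one_gt_d9
    linarith
  have h3 : (2 : ℝ) < (lacN p j : ℝ) := lt_of_lt_of_le h1 (lacN_lb j)
  exact_mod_cast h3

lemma lacN_pos (hp0 : 0 ≤ p) (j : ℕ) : (0:ℝ) < (lacN p j : ℝ) := by
  have := three_le_lacN (p := p) hp0 j
  have : (3:ℝ) ≤ (lacN p j : ℝ) := by exact_mod_cast this
  linarith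

lemma log_lacN_lb (j : ℕ) : lacL p j ≤ Real.log (lacN p j) := by
  have := Real.log_le_log (Real.exp_pos _) (lacN_lb (p := p) j)
  rwa [Real.log_exp] at this

lemma log_lacN_ub (hp0 : 0 ≤ p) (j : ℕ) : Real.log (lacN p j) ≤ lacL p j + 1 := by
  have h1 : (lacN p j : ℝ) ≤ Real.exp (lacL p j + 1) := by
    rw [Real.exp_add]
    have h2 := lacN_ub (p := p) j
    have h3 : (1:ℝ) ≤ Real.exp (lacL p j) := Real.one_le_exp (lacL_pos hp0 j).le
    have h4 := Real.exp_one_gt_d9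
    nlinarith
  have := Real.log_le_log (lacN_pos hp0 j) h1
  rwa [Real.log_exp] at this

lemma log_lacN_pos (hp0 : 0 ≤ p) (j : ℕ) : 0 < Real.log (lacN p j) :=
  lt_of_lt_of_le (lacL_pos hp0 j) (log_lacN_lb j)

lemma lacL_tendsto (hp0 : 0 < p) : Tendsto (lacL p) atTop atTop := by
  have h1 : Tendsto (fun j : ℕ => (j : ℝ) + 1) atTop atTop :=
    tendsto_atTop_add_const_right _ 1 tendsto_natCast_atTop_atTop
  exact (tendsto_rpow_atTop hp0).comp h1

-- exp(1/2) ≤ 2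
lemma exp_half_le_two : Real.exp (1/2 : ℝ) ≤ 2 := by
  have h := Real.exp_add (1/2) (1/2)
  norm_num at h
  nlinarith [Real.exp_one_lt_d9, Real.exp_pos (1/2 : ℝ)]

-- exp δ ≤ 1 + 2δ for 0 ≤ δ ≤ 1/2
lemma exp_le_one_add_two_mul {δ : ℝ} (h0 : 0 ≤ δ) (h1 : δ ≤ 1/2) :
    Real.exp δ ≤ 1 + 2 * δ := by
  have h2 : -δ + 1 ≤ Real.exp (-δ) := Real.add_one_le_exp (-δ)
  have h3 : Real.exp δ * Real.exp (-δ) = 1 := by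
    rw [← Real.exp_add]; simp
  nlinarith [Real.exp_pos δ, Real.exp_pos (-δ)]


lemma lac_gap {B p : ℝ} (hB : 40 ≤ B) (hp0 : 0 < p) (hp20 : p ≤ 1/20)
    (hpB : p * B = 2) :
    ∀ᶠ j in atTop, (lacN p (j+1) : ℝ) ≤
      (lacN p j : ℝ) * (1 + Real.log (lacN p j) ^ (-(B/2 - 1))) := by
  have hp1 : p ≤ 1 := hp20.trans (by norm_num)
  have hc3 : ∀ᶠ j : ℕ in atTop, Real.exp (-(lacL p j)) * ((j : ℝ) + 1) ≤ 1/4 := by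
    set n := ⌈1/p⌉₊ with hn_def
    have hn : 1 ≤ (n : ℝ) * p := (div_le_iff₀ hp0).mp (Nat.le_ceil (1/p))
    have hg : Tendsto (fun j : ℕ => (lacL p j) ^ n * Real.exp (-(lacL p j)))
        atTop (nhds 0) :=
      (tendsto_pow_mul_exp_neg_atTop_nhds_zero n).comp (lacL_tendsto hp0)
    filter_upwards [hg.eventually_lt_const (by norm_num : (0:ℝ) < 1/4)] with j hj
    have hmain : Real.exp (-(lacL p j)) * ((j : ℝ) + 1) ≤
        (lacL p j) ^ n * Real.exp (-(lacL p j)) := by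
      rw [mul_comm]
      refine mul_le_mul_of_nonneg_right ?_ (Real.exp_pos _).le
      have h1 : ((j:ℝ)+1) ^ (1:ℝ) ≤ ((j:ℝ)+1) ^ (p * (n:ℝ)) :=
        Real.rpow_le_rpow_of_exponent_le (one_le_m j) (by nlinarith)
      rw [Real.rpow_one] at h1
      calc (j:ℝ) + 1 ≤ ((j:ℝ)+1) ^ (p * (n:ℝ)) := h1
        _ = (lacL p j) ^ n := by
            rw [Real.rpow_mul (m_pos j).le, Real.rpow_natCast]; rfl
    linarith
  have hc4 : ∀ᶠ j : ℕ in atTop, (B/2 - 1) * ((j:ℝ)+1) ^ (-p) ≤ 1/2 := by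
    have h1 : Tendsto (fun j : ℕ => (j : ℝ) + 1) atTop atTop :=
      tendsto_atTop_add_const_right _ 1 tendsto_natCast_atTop_atTop
    have h2 : Tendsto (fun j : ℕ => (B/2-1) * ((j:ℝ)+1) ^ (-p)) atTop (nhds 0) := by
      have h3 := ((tendsto_rpow_neg_atTop hp0).comp h1).const_mul (B/2-1)
      simpa using h3
    exact (h2.eventually_lt_const (by norm_num : (0:ℝ) < 1/2)).mono fun j hj => hj.le
  filter_upwards [hc3, hc4] with j h3 h4
  have hm1 : (1:ℝ) ≤ (j:ℝ) + 1 := one_le_m j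
  have hm0 : (0:ℝ) < (j:ℝ) + 1 := m_pos j
  set m : ℝ := (j : ℝ) + 1 with hm_def
  have hLj : lacL p j = m ^ p := rfl
  rw [hLj] at h3
  set δ : ℝ := p * m ^ (p - 1) with hδ_def
  have hmp1 : (0:ℝ) < m ^ (p - 1) := Real.rpow_pos_of_pos hm0 _
  have hδ0 : 0 ≤ δ := by positivity
  have hδhalf : δ ≤ 1/2 := by
    have : m ^ (p-1) ≤ 1 := Real.rpow_le_one_of_one_le_of_nonpos hm1 (by linarith)
    nlinarith
  -- Bernoulli step
  have hstep : lacL p (j+1) ≤ m ^ p + δ := by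
    have hdiv : m ^ (p - 1) = m ^ p / m := by
      rw [Real.rpow_sub hm0, Real.rpow_one]
    have e1 : lacL p (j+1) = (m + 1) ^ p := by
      simp only [lacL, hm_def]; push_cast; ring_nf
    have e2 : (m + 1) ^ p = m ^ p * (1 + 1/m) ^ p := by
      rw [← Real.mul_rpow hm0.le (by positivity)]
      congr 1; field_simp
    have e3 : (1 + 1/m) ^ p ≤ 1 + p * (1/m) :=
      rpow_one_add_le_one_add_mul_self (by
        have : (0:ℝ) ≤ 1/m := by positivity
        linarith) hp0.le hp1
    have e4 : m ^ p * (1 + p * (1/m)) = m ^ p + δ := by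
      rw [hδ_def, hdiv]; field_simp
    calc lacL p (j+1) = m ^ p * (1 + 1/m) ^ p := by rw [e1, e2]
      _ ≤ m ^ p * (1 + p * (1/m)) :=
          mul_le_mul_of_nonneg_left e3 (Real.rpow_nonneg hm0.le p)
      _ = m ^ p + δ := e4
  have hexpstep : Real.exp (lacL p (j+1)) ≤ Real.exp (m ^ p) * (1 + 2*δ) := by
    calc Real.exp (lacL p (j+1)) ≤ Real.exp (m ^ p + δ) := Real.exp_le_exp.2 hstep
      _ = Real.exp (m ^ p) * Real.exp δ := Real.exp_add _ δ
      _ ≤ Real.exp (m ^ p) * (1 + 2*δ) :=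
          mul_le_mul_of_nonneg_left (exp_le_one_add_two_mul hδ0 hδhalf) (Real.exp_pos _).le
  -- key inequality
  have hkey : 2*δ + Real.exp (-(m ^ p)) ≤ (m ^ p + 1) ^ (-(B/2 - 1)) := by
    have h2p : 2*δ ≤ (1/4) * m ^ (p-1) := by nlinarith
    have hexpu : Real.exp (-(m ^ p)) ≤ (1/4) * m ^ (p-1) := by
      have hmain : Real.exp (-(m ^ p)) ≤ (1/4) * m ^ (-1 : ℝ) := by
        rw [Real.rpow_neg_one]
        have h8 : (0:ℝ) < m⁻¹ := by positivity
        have h9 : Real.exp (-(m^p)) * m ≤ 1/4 := h3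
        calc Real.exp (-(m^p)) = Real.exp (-(m^p)) * m * m⁻¹ := by field_simp
          _ ≤ 1/4 * m⁻¹ := mul_le_mul_of_nonneg_right h9 h8.le
      have : m ^ (-1:ℝ) ≤ m ^ (p-1) :=
        Real.rpow_le_rpow_of_exponent_le hm1 (by linarith)
      linarith
    have hrhs : (1/2) * m ^ (p-1) ≤ (m ^ p + 1) ^ (-(B/2 - 1)) := by
      have hu1 : m ^ p + 1 = m ^ p * (1 + m ^ (-p)) := by
        rw [mul_add, mul_one, ← Real.rpow_add hm0]
        simp
      have hXpos : (0:ℝ) < 1 + m ^ (-p) := by positivity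
      rw [hu1, Real.mul_rpow (by positivity) hXpos.le]
      have h1 : (m ^ p) ^ (-(B/2-1)) = m ^ (p-1) := by
        rw [← Real.rpow_mul hm0.le]
        congr 1; nlinarith
      rw [h1]
      have hX : (1/2 : ℝ) ≤ (1 + m ^ (-p)) ^ (-(B/2-1)) := by
        have hbig : (1 + m ^ (-p)) ^ (B/2 - 1) ≤ 2 := by
          have hb1 : (1 + m ^ (-p)) ^ (B/2-1) ≤ (Real.exp (m ^ (-p))) ^ (B/2 - 1) := by
            apply Real.rpow_le_rpow hXpos.le _ (by linarith)
            have := Real.add_one_le_exp (m ^ (-p))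
            linarith
          have hb2 : (Real.exp (m ^ (-p))) ^ (B/2-1) = Real.exp (m ^ (-p) * (B/2-1)) := by
            rw [Real.exp_mul]
          have hb3 : Real.exp (m ^ (-p) * (B/2-1)) ≤ Real.exp (1/2 : ℝ) :=
            Real.exp_le_exp.2 (by linarith [h4])
          calc (1 + m ^ (-p)) ^ (B/2-1) ≤ (Real.exp (m ^ (-p))) ^ (B/2-1) := hb1
            _ = Real.exp (m ^ (-p) * (B/2-1)) := hb2
            _ ≤ Real.exp (1/2 : ℝ) := hb3
            _ ≤ 2 := exp_half_le_two
        have hpos2 : (0:ℝ) < (1 + m ^ (-p)) ^ (B/2-1) := Real.rpow_pos_of_pos hXpos _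
        rw [Real.rpow_neg hXpos.le]
        have h10 : (2:ℝ)⁻¹ ≤ ((1 + m ^ (-p)) ^ (B/2-1))⁻¹ :=
          inv_anti₀ hpos2 hbig
        have : ((2:ℝ))⁻¹ = 1/2 := by norm_num
        linarith
      calc (1/2) * m ^ (p-1) ≤ (1 + m ^ (-p)) ^ (-(B/2-1)) * m ^ (p-1) :=
            mul_le_mul_of_nonneg_right hX hmp1.le
        _ = m ^ (p-1) * (1 + m ^ (-p)) ^ (-(B/2-1)) := by ring
    linarith
  -- assemble
  have hexpmul : Real.exp (m ^ p) * Real.exp (-(m ^ p)) = 1 := by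
    rw [← Real.exp_add]; simp
  have hfin1 : (lacN p (j+1) : ℝ) < Real.exp (m ^ p) * (1 + 2*δ + Real.exp (-(m ^ p))) := by
    have h5 := lacN_ub (p := p) (j+1)
    have h6 : Real.exp (m^p) * (1 + 2*δ + Real.exp (-(m^p))) =
        Real.exp (m^p) * (1 + 2*δ) + 1 := by
      rw [mul_add, hexpmul, mul_add]
    linarith
  have hfin2 : Real.exp (m^p) * (1 + 2*δ + Real.exp (-(m^p))) ≤
      Real.exp (m^p) * (1 + (m^p+1) ^ (-(B/2-1))) :=
    mul_le_mul_of_nonneg_left (by linarith) (Real.exp_pos _).le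
  have hfin3 : Real.exp (m^p) * (1 + (m^p+1) ^ (-(B/2-1))) ≤
      (lacN p j : ℝ) * (1 + Real.log (lacN p j) ^ (-(B/2-1))) := by
    have hr : (m^p+1) ^ (-(B/2-1)) ≤ Real.log (lacN p j) ^ (-(B/2-1)) := by
      have := log_lacN_ub (p := p) hp0.le j
      rw [hLj] at this
      exact Real.rpow_le_rpow_of_nonpos (log_lacN_pos hp0.le j) this (by linarith)
    have h6 : (0:ℝ) ≤ 1 + (m^p+1) ^ (-(B/2-1)) := by positivity
    have h7 : Real.exp (m ^ p) ≤ (lacN p j : ℝ) := by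
      have := lacN_lb (p := p) j; rw [hLj] at this; exact this
    apply mul_le_mul h7 (by linarith) h6 (lacN_pos hp0.le j).le
  linarith


lemma lac_bb {B p : ℝ} (hB : 40 ≤ B) (hp0 : 0 < p) (hp20 : p ≤ 1/20) :
    Tendsto (fun j : ℕ => (lacL p (j+1) + 1) ^ (2*B/5 - 2) *
      (2 * lacL p j ^ (1 - 2*B/5))) atTop (nhds 0) := by
  have hp1 : p ≤ 1 := hp20.trans (by norm_num)
  have ha0 : (0:ℝ) ≤ 2*B/5 - 2 := by linarith
  have hub : ∀ j : ℕ, (lacL p (j+1) + 1) ^ (2*B/5 - 2) *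
      (2 * lacL p j ^ (1 - 2*B/5)) ≤ (2 * 3 ^ (2*B/5-2)) * (lacL p j)⁻¹ := by
    intro j
    have hL0 : 0 < lacL p j := lacL_pos hp0.le j
    have hL1 : 1 ≤ lacL p j := one_le_lacL hp0.le j
    have h31 : lacL p (j+1) + 1 ≤ 3 * lacL p j := by
      have hm1 : (1:ℝ) ≤ (j:ℝ) + 1 := one_le_m j
      have hm0 : (0:ℝ) < (j:ℝ) + 1 := m_pos j
      have e1 : lacL p (j+1) = ((j:ℝ) + 2) ^ p := by
        simp only [lacL]; push_cast; ring_nf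
      have e2 : ((j:ℝ)+2) ^ p ≤ (2 * ((j:ℝ)+1)) ^ p :=
        Real.rpow_le_rpow (by linarith) (by linarith) hp0.le
      have e3 : (2 * ((j:ℝ)+1)) ^ p = 2 ^ p * lacL p j := by
        rw [Real.mul_rpow (by norm_num) hm0.le]; rfl
      have e4 : (2:ℝ) ^ p ≤ 2 := by
        have := Real.rpow_le_rpow_of_exponent_le (x := 2) one_le_two hp1
        rwa [Real.rpow_one] at this
      have e5 : 2 ^ p * lacL p j ≤ 2 * lacL p j :=
        mul_le_mul_of_nonneg_right e4 hL0.le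
      have e6 : lacL p (j+1) ≤ 2 * lacL p j := by
        rw [e1]
        calc ((j:ℝ)+2) ^ p ≤ 2 ^ p * lacL p j := by rw [← e3]; exact e2
          _ ≤ 2 * lacL p j := e5
      linarith
    have h6 : (lacL p (j+1) + 1) ^ (2*B/5-2) ≤ (3 * lacL p j) ^ (2*B/5-2) :=
      Real.rpow_le_rpow (by linarith [lacL_pos hp0.le (j+1)]) h31 ha0
    have h7 : (3 * lacL p j) ^ (2*B/5-2) = 3 ^ (2*B/5-2) * (lacL p j) ^ (2*B/5-2) :=
      Real.mul_rpow (by norm_num) hL0.le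
    have h8 : (lacL p j) ^ (2*B/5-2) * (lacL p j) ^ (1-2*B/5) = (lacL p j)⁻¹ := by
      rw [← Real.rpow_add hL0, ← Real.rpow_neg_one (lacL p j)]
      congr 1; ring
    have h9 : (0:ℝ) ≤ lacL p j ^ (1 - 2*B/5) := Real.rpow_nonneg hL0.le _
    calc (lacL p (j+1) + 1) ^ (2*B/5 - 2) * (2 * lacL p j ^ (1 - 2*B/5))
        ≤ (3 * lacL p j) ^ (2*B/5-2) * (2 * lacL p j ^ (1 - 2*B/5)) := by
          apply mul_le_mul_of_nonneg_right h6 (by linarith)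
      _ = (2 * 3 ^ (2*B/5-2)) * ((lacL p j) ^ (2*B/5-2) * (lacL p j) ^ (1-2*B/5)) := by
          rw [h7]; ring
      _ = (2 * 3 ^ (2*B/5-2)) * (lacL p j)⁻¹ := by rw [h8]
  have hlow : ∀ j : ℕ, 0 ≤ (lacL p (j+1) + 1) ^ (2*B/5 - 2) *
      (2 * lacL p j ^ (1 - 2*B/5)) := by
    intro j
    have := lacL_pos (p := p) hp0.le (j+1)
    have := lacL_pos (p := p) hp0.le j
    positivity
  have htend : Tendsto (fun j : ℕ => (2 * 3 ^ (2*B/5-2)) * (lacL p j)⁻¹)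
      atTop (nhds 0) := by
    have h1 : Tendsto (fun j : ℕ => (lacL p j)⁻¹) atTop (nhds 0) :=
      (lacL_tendsto hp0).inv_tendsto_atTop
    simpa using h1.const_mul (2 * (3:ℝ) ^ (2*B/5-2))
  exact squeeze_zero hlow hub htend


lemma lac_BC {B p c : ℝ} {X : Type*} [MeasurableSpace X] (ν : Measure X)
    [IsProbabilityMeasure ν] (A : ℕ → X → ℂ) (hint : ∀ N, Integrable (A N) ν)
    (hB : 40 ≤ B) (hp0 : 0 < p) (hp20 : p ≤ 1/20) (hpB : p * B = 2) (hc : 0 < c)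
    (hL1 : ∀ N : ℕ, 3 ≤ N → ∫ x, ‖A N x‖ ∂ν ≤ c * Real.log N ^ (-B)) :
    ∀ᵐ x ∂ν, ∀ᶠ j in atTop,
      ‖A (lacN p j) x‖ < lacL p j ^ (1 - 2*B/5) := by
  have hB0 : (0:ℝ) < B := by linarith
  set t : ℕ → ℝ := fun j => lacL p j ^ (1 - 2*B/5) with ht_def
  have ht0 : ∀ j, 0 < t j := fun j => Real.rpow_pos_of_pos (lacL_pos hp0.le j) _
  have habsint : ∀ N : ℕ, Integrable (fun x => ‖A N x‖) ν := by
    intro N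
    exact (hint N).norm
  have hbound : ∀ j : ℕ, ν {x | t j ≤ ‖A (lacN p j) x‖} ≤
      ENNReal.ofReal (c * ((j:ℝ)+1) ^ (-(6/5) : ℝ)) := by
    intro j
    have hmeas : AEMeasurable (fun x => ENNReal.ofReal (‖A (lacN p j) x‖)) ν :=
      (habsint (lacN p j)).aemeasurable.ennreal_ofReal
    have hmarkov : ν {x | t j ≤ ‖A (lacN p j) x‖} ≤
        (∫⁻ x, ENNReal.ofReal (‖A (lacN p j) x‖) ∂ν) /
          ENNReal.ofReal (t j) := by
      refine le_trans (measure_mono ?_)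
        (meas_ge_le_lintegral_div hmeas
          (by simp [ENNReal.ofReal_eq_zero, not_le, ht0 j]) ENNReal.ofReal_ne_top)
      intro x hx
      exact ENNReal.ofReal_le_ofReal hx
    have hlin : (∫⁻ x, ENNReal.ofReal (‖A (lacN p j) x‖) ∂ν) =
        ENNReal.ofReal (∫ x, ‖A (lacN p j) x‖ ∂ν) :=
      (ofReal_integral_eq_lintegral_ofReal (habsint _)
        (Eventually.of_forall fun x => norm_nonneg _)).symm
    have hint_le : ∫ x, ‖A (lacN p j) x‖ ∂ν ≤
        c * Real.log (lacN p j) ^ (-B) := hL1 _ (three_le_lacN hp0.le j)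
    have hreal : c * Real.log (lacN p j) ^ (-B) / t j ≤ c * ((j:ℝ)+1) ^ (-(6/5):ℝ) := by
      have hL0 : 0 < lacL p j := lacL_pos hp0.le j
      have hm1 : (1:ℝ) ≤ (j:ℝ)+1 := one_le_m j
      have h1 : Real.log (lacN p j) ^ (-B) ≤ (lacL p j) ^ (-B) :=
        Real.rpow_le_rpow_of_nonpos hL0 (log_lacN_lb j) (by linarith)
      have h2 : (lacL p j) ^ (-B) / t j = (lacL p j) ^ (-B - (1 - 2*B/5)) := by
        rw [ht_def, ← Real.rpow_sub hL0]
      have h3 : (lacL p j) ^ (-B - (1 - 2*B/5)) = ((j:ℝ)+1) ^ (p * (-B - (1 - 2*B/5))) := by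
        rw [Real.rpow_mul (m_pos j).le]; rfl
      have h4 : ((j:ℝ)+1) ^ (p * (-B - (1 - 2*B/5))) ≤ ((j:ℝ)+1) ^ (-(6/5):ℝ) := by
        apply Real.rpow_le_rpow_of_exponent_le hm1
        nlinarith
      calc c * Real.log (lacN p j) ^ (-B) / t j
          ≤ c * (lacL p j) ^ (-B) / t j := by
            gcongr
        _ = c * ((lacL p j) ^ (-B) / t j) := by ring
        _ = c * ((j:ℝ)+1) ^ (p * (-B - (1 - 2*B/5))) := by rw [h2, h3]
        _ ≤ c * ((j:ℝ)+1) ^ (-(6/5):ℝ) := mul_le_mul_of_nonneg_left h4 hc.le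
    calc ν {x | t j ≤ ‖A (lacN p j) x‖}
        ≤ (∫⁻ x, ENNReal.ofReal (‖A (lacN p j) x‖) ∂ν) /
            ENNReal.ofReal (t j) := hmarkov
      _ ≤ ENNReal.ofReal (c * Real.log (lacN p j) ^ (-B)) / ENNReal.ofReal (t j) := by
          rw [hlin]
          exact ENNReal.div_le_div_right (ENNReal.ofReal_le_ofReal hint_le) _
      _ = ENNReal.ofReal (c * Real.log (lacN p j) ^ (-B) / t j) :=
          (ENNReal.ofReal_div_of_pos (ht0 j)).symm
      _ ≤ ENNReal.ofReal (c * ((j:ℝ)+1) ^ (-(6/5):ℝ)) := ENNReal.ofReal_le_ofReal hreal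
  have hsum : Summable (fun j : ℕ => c * ((j:ℝ)+1) ^ (-(6/5) : ℝ)) := by
    have h0 : Summable (fun n : ℕ => (n : ℝ) ^ (-(6/5) : ℝ)) :=
      Real.summable_nat_rpow.2 (by norm_num)
    have h1 : Summable (fun n : ℕ => ((n + 1 : ℕ) : ℝ) ^ (-(6/5) : ℝ)) :=
      (_root_.summable_nat_add_iff 1).2 h0
    exact (h1.congr (fun n => by push_cast; ring_nf)).mul_left c
  have htsum : (∑' j, ν {x | t j ≤ ‖A (lacN p j) x‖}) ≠ ⊤ := by
    have h1 : (∑' j, ν {x | t j ≤ ‖A (lacN p j) x‖}) ≤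
        ∑' j : ℕ, ENNReal.ofReal (c * ((j:ℝ)+1) ^ (-(6/5):ℝ)) :=
      ENNReal.tsum_le_tsum hbound
    rw [← ENNReal.ofReal_tsum_of_nonneg (fun j => by positivity) hsum] at h1
    exact ne_top_of_le_ne_top ENNReal.ofReal_ne_top h1
  have hae := MeasureTheory.ae_eventually_notMem htsum
  filter_upwards [hae] with x hx
  filter_upwards [hx] with j hj
  simpa [Set.mem_setOf_eq, not_le] using hj

end LacunaryTrickAux

lemma exists_block (f : ℕ → ℕ) (J N : ℕ) (hJ : f J ≤ N) (K : ℕ)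
    (hK : ∀ j, K ≤ j → N < f j) :
    ∃ j', J ≤ j' ∧ f j' ≤ N ∧ N < f (j'+1) := by
  classical
  refine ⟨Nat.findGreatest (fun j => f j ≤ N) (max J K),
    Nat.le_findGreatest (le_max_left J K) hJ,
    Nat.findGreatest_spec (P := fun j => f j ≤ N) (le_max_left J K) hJ, ?_⟩
  rcases le_or_gt (Nat.findGreatest (fun j => f j ≤ N) (max J K) + 1) (max J K) with h | h
  · exact Nat.not_le.mp (Nat.findGreatest_is_greatest (P := fun j => f j ≤ N) (Nat.lt_succ_self _) h)
  · exact hK _ (le_trans (le_max_right J K) h.le)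

open LacunaryTrickAux in
/-- The lacunary subsequence trick: quantitative `L¹` decay plus stability on
multiplicatively short ranges gives pointwise a.e. convergence to `0` at a
polylogarithmic rate. -/
theorem lacunary_trick (B : ℝ) (hB : 40 ≤ B) {X : Type*} [MeasurableSpace X]
    (ν : Measure X) [IsProbabilityMeasure ν]
    (A : ℕ → X → ℂ) (hint : ∀ N, Integrable (A N) ν)
    (h1 : ∃ c : ℝ, 0 < c ∧ ∀ N : ℕ, 3 ≤ N →
      ∫ x, ‖A N x‖ ∂ν ≤ c * Real.log N ^ (-B))
    (h2 : ∀ N M : ℕ, 3 ≤ N → N < M → (M : ℝ) ≤ N * (1 + Real.log N ^ (-(B / 2 - 1))) →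
      ∀ᵐ x ∂ν, ‖A M x - A N x‖ ≤ Real.log N ^ (B / 10 - B / 2 + 1)) :
    ∀ᵐ x ∂ν, Tendsto (fun N : ℕ => Real.log N ^ (2 * B / 5 - 2) * ‖A N x‖)
      atTop (nhds 0) := by
  obtain ⟨c, hc, hL1⟩ := h1
  have hB0 : (0:ℝ) < B := by linarith
  set p : ℝ := 2 / B with hp_def
  have hp0 : 0 < p := by positivity
  have hp20 : p ≤ 1/20 := by
    rw [hp_def, div_le_div_iff₀ hB0 (by norm_num)]; linarith
  have hpB : p * B = 2 := by rw [hp_def]; field_simp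
  have ha0 : (0:ℝ) < 2 * B / 5 - 2 := by linarith
  have h2' : ∀ᵐ x ∂ν, ∀ Np Mp : ℕ, 3 ≤ Np → Np < Mp →
      (Mp:ℝ) ≤ Np * (1 + Real.log Np ^ (-(B/2-1))) →
      ‖A Mp x - A Np x‖ ≤ Real.log Np ^ (B/10 - B/2 + 1) := by
    rw [ae_all_iff]
    intro Np
    rw [ae_all_iff]
    intro Mp
    by_cases hcnd : 3 ≤ Np ∧ Np < Mp ∧ (Mp:ℝ) ≤ Np * (1 + Real.log Np ^ (-(B/2-1)))
    · filter_upwards [h2 Np Mp hcnd.1 hcnd.2.1 hcnd.2.2] with x hx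
      intro _ _ _; exact hx
    · exact Eventually.of_forall fun x ha hb hc' => absurd ⟨ha, hb, hc'⟩ hcnd
  have hgap := lac_gap (p := p) hB hp0 hp20 hpB
  have hbb := lac_bb (p := p) hB hp0 hp20
  have hBC := lac_BC ν A hint hB hp0 hp20 hpB hc hL1
  filter_upwards [hBC, h2'] with x hx1 hx2
  rw [tendsto_order]
  constructor
  · intro b hb
    refine Eventually.of_forall fun N => ?_
    have h0 : 0 ≤ Real.log N ^ (2 * B / 5 - 2) * ‖A N x‖ :=
      mul_nonneg (Real.rpow_nonneg (Real.log_natCast_nonneg N) _)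
        (norm_nonneg _)
    linarith
  · intro ε hε
    have hbbe := hbb.eventually_lt_const hε
    obtain ⟨J, hJ⟩ := eventually_atTop.1 (hgap.and (hx1.and hbbe))
    rw [eventually_atTop]
    refine ⟨max 3 (lacN p J), fun N hN => ?_⟩
    have hN3 : 3 ≤ N := le_trans (le_max_left _ _) hN
    have hNJ : lacN p J ≤ N := le_trans (le_max_right _ _) hN
    have hexptop : Tendsto (fun j : ℕ => Real.exp (lacL p j)) atTop atTop :=
      Real.tendsto_exp_atTop.comp (lacL_tendsto hp0)
    obtain ⟨K, hK⟩ := eventually_atTop.1 (hexptop.eventually_gt_atTop (N:ℝ))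
    have hK' : ∀ j, K ≤ j → N < lacN p j := by
      intro j hj
      have h5 : (N:ℝ) < (lacN p j : ℝ) := lt_of_lt_of_le (hK j hj) (lacN_lb _)
      exact_mod_cast h5
    obtain ⟨j', hj'J, hPj', hup⟩ := exists_block (lacN p) J N hNJ K hK'
    obtain ⟨hgapj, hxj, hbbj⟩ := hJ j' hj'J
    set tj := lacL p j' ^ (1 - 2*B/5) with htj_def
    have htj0 : 0 < tj := Real.rpow_pos_of_pos (lacL_pos hp0.le j') _
    have habs : ‖A N x‖ ≤ 2 * tj := by
      rcases eq_or_lt_of_le hPj' with heq | hlt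
      · rw [← heq]
        linarith [hxj]
      · have hle2 : (N:ℝ) ≤ (lacN p j' : ℝ) * (1 + Real.log (lacN p j') ^ (-(B/2-1))) := by
          have h6 : (N:ℝ) ≤ (lacN p (j'+1) : ℝ) := by exact_mod_cast hup.le
          exact h6.trans hgapj
        have hdiff := hx2 (lacN p j') N (three_le_lacN hp0.le j') hlt hle2
        have hdb : Real.log (lacN p j') ^ (B/10 - B/2 + 1) ≤ tj := by
          have hexp_eq : B/10 - B/2 + 1 = 1 - 2*B/5 := by ring
          rw [hexp_eq, htj_def]
          exact Real.rpow_le_rpow_of_nonpos (lacL_pos hp0.le j') (log_lacN_lb j')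
            (by linarith)
        have htri : ‖A N x‖ ≤
            ‖A (lacN p j') x‖ + ‖A N x - A (lacN p j') x‖ := by
          have h8 := norm_add_le (A (lacN p j') x)
            (A N x - A (lacN p j') x)
          simpa using h8
        linarith [hdiff.trans hdb, hxj]
    have hlogub : Real.log N ≤ lacL p (j'+1) + 1 := by
      have hNpos : (0:ℝ) < (N:ℝ) := by
        have : 0 < N := by omega
        exact_mod_cast this
      have h7 : Real.log N ≤ Real.log (lacN p (j'+1)) :=
        Real.log_le_log hNpos (by exact_mod_cast hup.le)
      exact h7.trans (log_lacN_ub hp0.le _)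
    have hlog0 : 0 ≤ Real.log N := Real.log_natCast_nonneg N
    calc Real.log N ^ (2 * B / 5 - 2) * ‖A N x‖
        ≤ (lacL p (j'+1) + 1) ^ (2*B/5-2) * (2 * tj) := by
          apply mul_le_mul (Real.rpow_le_rpow hlog0 hlogub ha0.le) habs
            (norm_nonneg _)
            (Real.rpow_nonneg (by linarith [lacL_pos hp0.le (j'+1)]) _)
      _ < ε := hbbj
end
end
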